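/- arXiv:1101.2819 — 4 statements merged into one kernel-verified Lean document; each statement's English description precedes it below -/
import Mathlib

section
/- For every probabilistic labeled transition system L, every state s, and every action a: if s ⇒^a ν (the extended transition), then ν is a probability distribution over S_⊥, i.e. 0 ≤ ν(x) ≤ 1 for all x ∈ S_⊥ and Σ_{x∈S_⊥} ν(x) = 1. -/
open scoped Classical

/-- Restriction of a sequence of actions to a subset `E` of actions. -/
noncomputable def restrictList {A : Type*} (E : Set A) : List A → List A
  | [] => []
  | a :: l => if a ∈ E then a :: restrictList E l else restrictList E l

/-- `gammaSet E evec` is the set of action sequences whose restriction to `E` is `evec`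
and whose last element is the last element of `evec` (with `gammaSet E [] = {[]}`). -/
def gammaSet {A : Type*} (E : Set A) (evec : List A) : Set (List A) :=
  {avec | (evec = [] ∧ avec = []) ∨
    (evec ≠ [] ∧ restrictList E avec = evec ∧ avec.getLast? = evec.getLast?)}

/-- A probabilistic labeled transition system (data part): sets of data points,
queries, responses, and hidden outputs, together with a (deterministic) partial
transition function assigning to a state and an action a discrete distribution
over next states. -/
structure PLTS (S : Type*) (A : Type*) where
  dat : Set A
  qry : Set A
  resp : Set A
  hid : Set A
  trans : S → A → Option (S → ℝ)

namespace PLTS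

variable {S : Type*} {A : Type*}

def inp (L : PLTS S A) : Set A := L.dat ∪ L.qry
def out (L : PLTS S A) : Set A := L.resp ∪ L.hid
def obs (L : PLTS S A) : Set A := L.qry ∪ L.resp

/-- Well-formedness of a PLTS: the action sets are pairwise suitably disjoint,
every transition target is a discrete probability distribution, output determinism,
quasi-input enabling, and transitions only occur on actions of the system. -/
def WF (L : PLTS S A) : Prop :=
  Disjoint L.dat L.qry ∧ Disjoint L.resp L.hid ∧ Disjoint L.inp L.out ∧
  (∀ s a μ, L.trans s a = some μ → (∀ s', 0 ≤ μ s') ∧ (∑' s', μ s') = 1) ∧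
  (∀ s a o μ μ', o ∈ L.out → L.trans s o = some μ → L.trans s a = some μ' → a = o) ∧
  (∀ s i₁ i₂ μ₁, i₁ ∈ L.inp → i₂ ∈ L.inp → L.trans s i₁ = some μ₁ → ∃ μ₂, L.trans s i₂ = some μ₂) ∧
  (∀ s a μ, L.trans s a = some μ → a ∈ L.inp ∪ L.out)

/-- The trace probability `⟨L,s⟩(i⃗)(a⃗,s')`: probability that, with available inputs
`ivec`, the automaton started at `s` produces the action sequence `avec` and is in
state `s'` after the last action.  (First argument is the action sequence.) -/
noncomputable def traceProb (L : PLTS S A) : List A → S → List A → S → ℝ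
  | [], s, _, s' => if s' = s then 1 else 0
  | a :: avec, s, ivec, s' =>
    if a ∈ L.inp then
      match ivec with
      | [] => 0
      | i :: ivec' =>
        if i = a then
          match L.trans s a with
          | some μ => ∑' s'' : S, μ s'' * L.traceProb avec s'' ivec' s'
          | none => 0
        else 0
    else
      match L.trans s a with
      | some μ => ∑' s'' : S, μ s'' * L.traceProb avec s'' ivec s'
      | none => 0

/-- `Pr[⟦⟨L,s⟩⟧(i⃗) ⊒ a⃗]`. -/
noncomputable def prefixProb (L : PLTS S A) (s : S) (ivec avec : List A) : ℝ :=
  ∑' s' : S, L.traceProb avec s ivec s'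

/-- `γ(e⃗)` for the observable actions of `L`. -/
def gamma (L : PLTS S A) (evec : List A) : Set (List A) :=
  gammaSet L.obs evec

/-- `Pr[⟦⟨L,s⟩⟧(i⃗)↾E ⊒ e⃗]`. -/
noncomputable def obsProb (L : PLTS S A) (s : S) (ivec evec : List A) : ℝ :=
  ∑' avec : L.gamma evec, L.prefixProb s ivec avec.1

/-- A state is `H`-disabled if it enables no hidden output. -/
def HDisabled (L : PLTS S A) (s : S) : Prop := ∀ h ∈ L.hid, L.trans s h = none

/-- Sequences of hidden actions. -/
def HSeq (L : PLTS S A) : Set (List A) := {l | ∀ x ∈ l, x ∈ L.hid}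

/-- The state part of the extended-transition distribution obtained from `μ`. -/
noncomputable def extDistState (L : PLTS S A) (μ : S → ℝ) (s' : S) : ℝ :=
  if L.HDisabled s' then ∑' s'' : S, μ s'' * ∑' hl : L.HSeq, L.traceProb hl.1 s'' [] s' else 0

/-- The extended-transition distribution over `S_⊥ = Option S` obtained from `μ`. -/
noncomputable def extDist (L : PLTS S A) (μ : S → ℝ) : Option S → ℝ
  | some s' => L.extDistState μ s'
  | none => 1 - ∑' s' : S, L.extDistState μ s'

/-- The extended transition `s ⇒^a ν`. -/
def ExtTrans (L : PLTS S A) (s : S) (a : A) (ν : Option S → ℝ) : Prop :=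
  ∃ μ, L.trans s a = some μ ∧ ν = L.extDist μ

/-- The extended transition from an element of `S_⊥` (⊥ has no transitions). -/
def ExtTransX (L : PLTS S A) (x : Option S) (a : A) (ν : Option S → ℝ) : Prop :=
  ∃ s, x = some s ∧ L.ExtTrans s a ν

/-- Observable prefix probability from an element of `S_⊥`. -/
noncomputable def obsProbX (L : PLTS S A) (x : Option S) (ivec evec : List A) : ℝ :=
  match x with
  | some s => L.obsProb s ivec evec
  | none => if evec = [] then 1 else 0

end PLTS

/-- The elements of `T` having no strict prefix in `T`. -/
def minimalPrefixes {X : Type*} (T : Set (List X)) : Set (List X) :=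
  {e | e ∈ T ∧ ¬ ∃ e' ∈ T, e' <+: e ∧ e' ≠ e}

namespace PLTS

variable {S : Type*} {A : Type*}

/-- `Pr[⟦M⟧(i⃗)↾E ⊒ T]` for a set `T` of observable sequences. -/
noncomputable def obsSetProb (L : PLTS S A) (s : S) (ivec : List A) (T : Set (List A)) : ℝ :=
  ∑' e : minimalPrefixes T, L.obsProb s ivec e.1

/-- `Δ(i⃗₁,i⃗₂) ≤ 1`: the two input sequences are equal or one is obtained from the
other by the insertion of a single data point. -/
def AdjOne (L : PLTS S A) (i₁ i₂ : List A) : Prop :=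
  i₁ = i₂ ∨ ∃ (pre post : List A) (d : A), d ∈ L.dat ∧
    ((i₁ = pre ++ d :: post ∧ i₂ = pre ++ post) ∨ (i₂ = pre ++ d :: post ∧ i₁ = pre ++ post))

/-- `Δ(i⃗₁,i⃗₂) ≤ n`. -/
def DeltaLe (L : PLTS S A) : ℕ → List A → List A → Prop
  | 0, i₁, i₂ => i₁ = i₂
  | n + 1, i₁, i₂ => i₁ = i₂ ∨ ∃ (pre post₁ post₂ : List A) (d : A), d ∈ L.dat ∧
      (((i₁ = pre ++ d :: post₁ ∧ i₂ = pre ++ post₂) ∨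
        (i₂ = pre ++ d :: post₂ ∧ i₁ = pre ++ post₁)) ∧ L.DeltaLe n post₁ post₂)

/-- `ε`-differential noninterference of the automaton `⟨L, s₀⟩`. -/
def DiffNI (L : PLTS S A) (s₀ : S) (ε : ℝ) : Prop :=
  ∀ i₁ i₂ : List A, (∀ a ∈ i₁, a ∈ L.inp) → (∀ a ∈ i₂, a ∈ L.inp) → L.AdjOne i₁ i₂ →
    ∀ T : Set (List A), (∀ e ∈ T, ∀ a ∈ e, a ∈ L.obs) →
      L.obsSetProb s₀ i₁ T ≤ Real.exp ε * L.obsSetProb s₀ i₂ T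

/-- A state is reachable from `s₀` if some trace reaches it with positive probability. -/
def Reachable (L : PLTS S A) (s₀ s : S) : Prop :=
  ∃ ivec avec, 0 < L.traceProb avec s₀ ivec s

/-- `HDisabled` extended to `S_⊥`. -/
def HDisabledX (L : PLTS S A) : Option S → Prop
  | some s => L.HDisabled s
  | none => True

end PLTS

/-- `δ`-approximate lifting of a relation `R` to distributions. -/
def ApproxLift {X : Type*} (R : X → X → Prop) (δ : ℝ) (ν₁ ν₂ : X → ℝ) : Prop :=
  ∃ β : {x : X // 0 < ν₁ x} → {x : X // 0 < ν₂ x}, Function.Bijective β ∧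
    ∀ x : {x : X // 0 < ν₁ x},
      R x.1 (β x).1 ∧ |Real.log (ν₁ x.1) - Real.log (ν₂ (β x).1)| ≤ δ

namespace PLTS

variable {S : Type*} {A : Type*}

/-- An `ε`-unwinding family for `L`: a family of relations over the `H`-disabled
states of `L` (extended to `S_⊥`), indexed by `[0,ε]`, satisfying the unwinding
conditions. -/
def IsUnwindingFamily (L : PLTS S A) (ε : ℝ) (R : ℝ → Option S → Option S → Prop) : Prop :=
  0 ≤ ε ∧
  (∀ ε', 0 ≤ ε' → ε' ≤ ε → ∀ x₁ x₂, R ε' x₁ x₂ → L.HDisabledX x₁ ∧ L.HDisabledX x₂) ∧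
  (∀ ε', 0 ≤ ε' → ε' ≤ ε → ∀ x₁ x₂, R ε' x₁ x₂ → ∀ a, a ∈ L.inp ∪ L.resp →
    (((∃ ν₁, L.ExtTransX x₁ a ν₁) ↔ (∃ ν₂, L.ExtTransX x₂ a ν₂)) ∧
     (∀ ν₁ ν₂, L.ExtTransX x₁ a ν₁ → L.ExtTransX x₂ a ν₂ →
       ∃ δ, 0 ≤ δ ∧ δ ≤ ε' ∧ ApproxLift (R (ε' - δ)) δ ν₁ ν₂)))

/-- The family `R` covers state `s` and data point `d`. -/
def Covers (L : PLTS S A) (ε : ℝ) (R : ℝ → Option S → Option S → Prop) (s : S) (d : A) : Prop :=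
  ∀ ν, L.ExtTrans s d ν → ν none = 0 ∧ ∀ s', 0 < ν (some s') → R ε (some s) (some s')

end PLTS

section Statements

section AuxLemmas

open PLTS

variable {S : Type} {A : Type}

lemma mu_facts {L : PLTS S A} (hWF : L.WF) {s : S} {a : A} {μ : S → ℝ}
    (h : L.trans s a = some μ) :
    (∀ t, 0 ≤ μ t) ∧ Summable μ ∧ (∑' t, μ t) = 1 := by
  obtain ⟨h0, h1⟩ := hWF.2.2.2.1 s a μ h
  refine ⟨h0, ?_, h1⟩
  by_contra hs
  rw [tsum_eq_zero_of_not_summable hs] at h1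
  norm_num at h1

lemma tp_nonneg {L : PLTS S A} (hWF : L.WF) :
    ∀ (avec : List A) (s : S) (ivec : List A) (s' : S), 0 ≤ L.traceProb avec s ivec s' := by
  intro avec
  induction avec with
  | nil =>
    intro s ivec s'
    simp only [traceProb]
    split <;> norm_num
  | cons a avec ih =>
    intro s ivec s'
    simp only [traceProb]
    split
    · split
      · exact le_refl 0
      · split
        · split
          · exact tsum_nonneg fun t => mul_nonneg ((mu_facts hWF ‹_›).1 t) (ih _ _ _)
          · exact le_refl 0
        · exact le_refl 0
    · split
      · exact tsum_nonneg fun t => mul_nonneg ((mu_facts hWF ‹_›).1 t) (ih _ _ _)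
      · exact le_refl 0

end AuxLemmas
section AuxLemmas2

open PLTS

variable {S : Type} {A : Type}

lemma tp_le_one {L : PLTS S A} (hWF : L.WF) :
    ∀ (avec : List A) (s : S) (ivec : List A) (s' : S), L.traceProb avec s ivec s' ≤ 1 := by
  intro avec
  induction avec with
  | nil =>
    intro s ivec s'
    simp only [traceProb]
    split <;> norm_num
  | cons a avec ih =>
    intro s ivec s'
    have key : ∀ (μ : S → ℝ) (jvec : List A), (∀ t, 0 ≤ μ t) → Summable μ → (∑' t, μ t) = 1 →
        (∑' t, μ t * L.traceProb avec t jvec s') ≤ 1 := by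
      intro μ jvec h0 hsum h1
      calc (∑' t, μ t * L.traceProb avec t jvec s')
          ≤ ∑' t, μ t := by
            refine Summable.tsum_le_tsum (fun t => ?_) ?_ hsum
            · exact mul_le_of_le_one_right (h0 t) (ih _ _ _)
            · exact Summable.of_nonneg_of_le
                (fun t => mul_nonneg (h0 t) (tp_nonneg hWF _ _ _ _))
                (fun t => mul_le_of_le_one_right (h0 t) (ih _ _ _)) hsum
        _ = 1 := h1
    simp only [traceProb]
    split
    · split
      · norm_num
      · split
        · split
          · rename_i htr
            obtain ⟨h0, hsum, h1⟩ := mu_facts hWF htr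
            exact key _ _ h0 hsum h1
          · norm_num
        · norm_num
    · split
      · rename_i htr
        obtain ⟨h0, hsum, h1⟩ := mu_facts hWF htr
        exact key _ _ h0 hsum h1
      · norm_num

lemma tp_summable {L : PLTS S A} (hWF : L.WF) {s : S} {a : A} {μ : S → ℝ}
    (h : L.trans s a = some μ) (avec ivec : List A) (s' : S) :
    Summable (fun t => μ t * L.traceProb avec t ivec s') := by
  obtain ⟨h0, hsum, _⟩ := mu_facts hWF h
  exact Summable.of_nonneg_of_le
    (fun t => mul_nonneg (h0 t) (tp_nonneg hWF _ _ _ _))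
    (fun t => mul_le_of_le_one_right (h0 t) (tp_le_one hWF _ _ _ _)) hsum

lemma hid_not_inp {L : PLTS S A} (hWF : L.WF) {h : A} (hh : h ∈ L.hid) : h ∉ L.inp :=
  fun hin => Set.disjoint_left.mp hWF.2.2.1 hin (Or.inr hh)

lemma tp_hidden_step {L : PLTS S A} (hWF : L.WF) {s : S} {h : A} {μ : S → ℝ}
    (hh : h ∈ L.hid) (htr : L.trans s h = some μ) (rest : List A) (s' : S) :
    L.traceProb (h :: rest) s [] s' = ∑' t, μ t * L.traceProb rest t [] s' := by
  simp only [traceProb, hid_not_inp hWF hh, if_false, htr]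

lemma tp_hdis_cons {L : PLTS S A} (hWF : L.WF) {s : S} (hs : L.HDisabled s) {a : A}
    (ha : a ∈ L.hid) (rest : List A) (s' : S) :
    L.traceProb (a :: rest) s [] s' = 0 := by
  simp only [traceProb, hid_not_inp hWF ha, if_false, hs a ha]

lemma tp_blocked {L : PLTS S A} (hWF : L.WF) {s : S} {h : A} {μ : S → ℝ}
    (hh : h ∈ L.hid) (htr : L.trans s h = some μ) {a : A} (hne : a ≠ h)
    (rest : List A) (s' : S) :
    L.traceProb (a :: rest) s [] s' = 0 := by
  have hnone : L.trans s a = none := by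
    cases h' : L.trans s a with
    | none => rfl
    | some μ₂ => exact absurd (hWF.2.2.2.2.1 s a h μ μ₂ (Or.inr hh) htr h') hne
  simp only [traceProb, hnone]
  split <;> rfl

end AuxLemmas2
section AuxLemmas3

open PLTS

variable {S : Type} {A : Type}

lemma tp_claim {L : PLTS S A} (hWF : L.WF) :
    ∀ (n : ℕ) (s : S) (G : Finset (List A × S)),
      (∀ p ∈ G, (∀ x ∈ p.1, x ∈ L.hid) ∧ p.1.length ≤ n ∧ L.HDisabled p.2) →
      ∑ p ∈ G, L.traceProb p.1 s [] p.2 ≤ 1 := by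
  intro n
  induction n with
  | zero =>
    intro s G hG
    calc ∑ p ∈ G, L.traceProb p.1 s [] p.2
        ≤ ∑ p ∈ G, (if p = (([] : List A), s) then (1:ℝ) else 0) := by
          refine Finset.sum_le_sum fun p hp => ?_
          obtain ⟨-, hlen, -⟩ := hG p hp
          have hnil : p.1 = [] := List.eq_nil_of_length_eq_zero (Nat.le_zero.mp hlen)
          rw [hnil]
          simp only [traceProb]
          split_ifs with h1 h2 h2
          · exact le_refl 1
          · exact absurd (Prod.ext hnil h1) h2
          · norm_num
          · exact le_refl 0
      _ ≤ 1 := by rw [Finset.sum_ite_eq' G (([] : List A), s) (fun _ => (1:ℝ))]; split <;> norm_num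
  | succ n ih =>
    intro s G hG
    by_cases hs : L.HDisabled s
    · calc ∑ p ∈ G, L.traceProb p.1 s [] p.2
          ≤ ∑ p ∈ G, (if p = (([] : List A), s) then (1:ℝ) else 0) := by
            refine Finset.sum_le_sum fun p hp => ?_
            obtain ⟨hhid, -, -⟩ := hG p hp
            cases hp1 : p.1 with
            | nil =>
              simp only [traceProb]
              split_ifs with h1 h2 h2
              · exact le_refl 1
              · exact absurd (Prod.ext hp1 h1) h2
              · norm_num
              · exact le_refl 0
            | cons a rest =>
              rw [tp_hdis_cons hWF hs (hhid a (hp1 ▸ List.mem_cons_self (a := a) (l := rest)))]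
              split <;> norm_num
        _ ≤ 1 := by rw [Finset.sum_ite_eq' G (([] : List A), s) (fun _ => (1:ℝ))]; split <;> norm_num
    · -- s is H-enabled
      rw [HDisabled] at hs
      push_neg at hs
      obtain ⟨h, hh, htr0⟩ := hs
      obtain ⟨μ', htr⟩ := Option.ne_none_iff_exists'.mp htr0
      obtain ⟨hμ0, hμsum, hμ1⟩ := mu_facts hWF htr
      -- restrict to pairs whose trace starts with h
      have hfilter : ∑ p ∈ G.filter (fun p => p.1.head? = some h), L.traceProb p.1 s [] p.2
          = ∑ p ∈ G, L.traceProb p.1 s [] p.2 := by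
        refine Finset.sum_filter_of_ne fun p hp hne => ?_
        by_contra hhead
        apply hne
        cases hp1 : p.1 with
        | nil =>
          simp only [traceProb]
          have hps : p.2 ≠ s := fun he => htr0 (he ▸ ((hG p hp).2.2 h hh))
          rw [if_neg hps]
        | cons a rest =>
          have ha : a ≠ h := by
            intro he
            apply hhead
            rw [hp1, he, List.head?_cons]
          rw [tp_blocked hWF hh htr ha]
      rw [← hfilter]
      set Gf := G.filter (fun p => p.1.head? = some h) with hGf
      have hcons : ∀ p ∈ Gf, p.1 = h :: p.1.tail := by
        intro p hp
        have := (Finset.mem_filter.mp hp).2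
        cases hp1 : p.1 with
        | nil => rw [hp1] at this; simp at this
        | cons a rest =>
          rw [hp1] at this
          simp only [List.head?_cons, Option.some.injEq] at this
          simp [this]
      have hinj : ∀ p ∈ Gf, ∀ q ∈ Gf, (p.1.tail, p.2) = (q.1.tail, q.2) → p = q := by
        intro p hp q hq he
        have h1 := hcons p hp
        have h2 := hcons q hq
        have ht : p.1.tail = q.1.tail := (Prod.ext_iff.mp he).1
        exact Prod.ext (by rw [h1, h2, ht]) (Prod.ext_iff.mp he).2
      set G' := Gf.image (fun p => (p.1.tail, p.2)) with hG'
      have hG'prop : ∀ q ∈ G', (∀ x ∈ q.1, x ∈ L.hid) ∧ q.1.length ≤ n ∧ L.HDisabled q.2 := by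
        intro q hq
        obtain ⟨p, hp, hpq⟩ := Finset.mem_image.mp hq
        have hpG := (Finset.mem_filter.mp hp).1
        obtain ⟨hhid, hlen, hdis⟩ := hG p hpG
        refine ⟨?_, ?_, ?_⟩
        · intro x hx
          exact hhid x (by rw [← hpq] at hx; exact List.mem_of_mem_tail hx)
        · rw [← hpq]
          have := hcons p hp
          have hl : p.1.length = p.1.tail.length + 1 := by rw [this]; simp
          simp only []
          omega
        · rw [← hpq]; exact hdis
      have hsum_eq : ∑ p ∈ Gf, L.traceProb p.1 s [] p.2
          = ∑ q ∈ G', ∑' t, μ' t * L.traceProb q.1 t [] q.2 := by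
        rw [hG', Finset.sum_image hinj]
        refine Finset.sum_congr rfl fun p hp => ?_
        conv_lhs => rw [hcons p hp]
        exact tp_hidden_step hWF hh htr _ _
      rw [hsum_eq]
      -- now exchange and bound
      have hHS : ∀ q ∈ G', HasSum (fun t => μ' t * L.traceProb q.1 t [] q.2)
          (∑' t, μ' t * L.traceProb q.1 t [] q.2) :=
        fun q _ => (tp_summable hWF htr _ _ _).hasSum
      have hbig : HasSum (fun t => ∑ q ∈ G', μ' t * L.traceProb q.1 t [] q.2)
          (∑ q ∈ G', ∑' t, μ' t * L.traceProb q.1 t [] q.2) := hasSum_sum hHS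
      have hμHS : HasSum μ' 1 := hμ1 ▸ hμsum.hasSum
      refine hasSum_le (fun t => ?_) hbig hμHS
      rw [← Finset.mul_sum]
      exact mul_le_of_le_one_right (hμ0 t) (ih t G' hG'prop)

end AuxLemmas3
section AuxLemmas4

open PLTS

variable {S : Type} {A : Type}

/-- Auxiliary kernel: probability of ending in H-disabled state `q.1` via hidden
sequence `q.2` starting from `s''`. -/
noncomputable def auxF (L : PLTS S A) (s'' : S) : S × L.HSeq → ℝ :=
  fun q => if L.HDisabled q.1 then L.traceProb q.2.1 s'' [] q.1 else 0

lemma auxF_nonneg {L : PLTS S A} (hWF : L.WF) (s'' : S) (q : S × L.HSeq) :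
    0 ≤ auxF L s'' q := by
  unfold auxF
  split
  · exact tp_nonneg hWF _ _ _ _
  · exact le_refl 0

lemma auxF_sum_le {L : PLTS S A} (hWF : L.WF) (s'' : S) (u : Finset (S × L.HSeq)) :
    ∑ q ∈ u, auxF L s'' q ≤ 1 := by
  classical
  rw [show (fun q => auxF L s'' q) = fun q => if L.HDisabled q.1
      then L.traceProb q.2.1 s'' [] q.1 else 0 from rfl]
  rw [← Finset.sum_filter]
  set uf := u.filter (fun q => L.HDisabled q.1) with huf
  have hinj : ∀ p ∈ uf, ∀ q ∈ uf, (p.2.1, p.1) = (q.2.1, q.1) → p = q := by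
    intro p _ q _ he
    obtain ⟨h1, h2⟩ := Prod.ext_iff.mp he
    exact Prod.ext h2 (Subtype.ext h1)
  set G := uf.image (fun q => (q.2.1, q.1)) with hG
  have hsum : ∑ q ∈ uf, L.traceProb q.2.1 s'' [] q.1 = ∑ p ∈ G, L.traceProb p.1 s'' [] p.2 := by
    rw [hG, Finset.sum_image hinj]
  rw [hsum]
  refine tp_claim hWF (G.sup fun p => p.1.length) s'' G fun p hp => ?_
  obtain ⟨q, hq, hqp⟩ := Finset.mem_image.mp hp
  refine ⟨?_, Finset.le_sup (f := fun p : List A × S => p.1.length) hp, ?_⟩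
  · intro x hx
    have := q.2.2
    rw [← hqp] at hx
    exact this x hx
  · rw [← hqp]
    exact (Finset.mem_filter.mp hq).2

lemma auxF_summable {L : PLTS S A} (hWF : L.WF) (s'' : S) : Summable (auxF L s'' ) :=
  summable_of_sum_le (fun q => auxF_nonneg hWF s'' q) (auxF_sum_le hWF s'')

lemma auxF_tsum_le {L : PLTS S A} (hWF : L.WF) (s'' : S) : ∑' q, auxF L s'' q ≤ 1 :=
  Summable.tsum_le_of_sum_le (auxF_summable hWF s'') (auxF_sum_le hWF s'')

/-- Total probability of reaching H-disabled state `s'` from `s''` via hidden sequences. -/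
noncomputable def auxM (L : PLTS S A) (s'' s' : S) : ℝ :=
  ∑' hl : L.HSeq, auxF L s'' (s', hl)

lemma auxM_nonneg {L : PLTS S A} (hWF : L.WF) (s'' s' : S) : 0 ≤ auxM L s'' s' :=
  tsum_nonneg fun hl => auxF_nonneg hWF s'' (s', hl)

lemma auxM_marg_summable {L : PLTS S A} (hWF : L.WF) (s'' : S) :
    Summable (fun s' => auxM L s'' s') :=
  (auxF_summable hWF s'').prod

lemma auxM_sum_fin_le {L : PLTS S A} (hWF : L.WF) (s'' : S) (Afin : Finset S) :
    ∑ s' ∈ Afin, auxM L s'' s' ≤ 1 := by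
  calc ∑ s' ∈ Afin, auxM L s'' s'
      ≤ ∑' s', auxM L s'' s' :=
        Summable.sum_le_tsum Afin (fun s' _ => auxM_nonneg hWF s'' s') (auxM_marg_summable hWF s'')
    _ = ∑' q, auxF L s'' q := (Summable.tsum_prod (auxF_summable hWF s'')).symm
    _ ≤ 1 := auxF_tsum_le hWF s''

lemma eds_eq {L : PLTS S A} (μ : S → ℝ) (s' : S) :
    L.extDistState μ s' = ∑' s'', μ s'' * auxM L s'' s' := by
  unfold extDistState auxM auxF
  by_cases hd : L.HDisabled s'
  · simp only [hd, if_true]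
  · simp only [hd, if_false, tsum_zero, mul_zero]

end AuxLemmas4
section AuxLemmas5

open PLTS

variable {S : Type} {A : Type}

lemma g_sum_le {L : PLTS S A} (hWF : L.WF) {μ : S → ℝ} (hμ0 : ∀ t, 0 ≤ μ t)
    (hμsum : Summable μ) (hμ1 : (∑' t, μ t) = 1) (u : Finset (S × S)) :
    ∑ q ∈ u, μ q.2 * auxM L q.2 q.1 ≤ 1 := by
  classical
  have hnn : ∀ q : S × S, 0 ≤ μ q.2 * auxM L q.2 q.1 :=
    fun q => mul_nonneg (hμ0 q.2) (auxM_nonneg hWF q.2 q.1)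
  calc ∑ q ∈ u, μ q.2 * auxM L q.2 q.1
      ≤ ∑ q ∈ (u.image Prod.fst) ×ˢ (u.image Prod.snd), μ q.2 * auxM L q.2 q.1 :=
        Finset.sum_le_sum_of_subset_of_nonneg Finset.subset_product
          (fun q _ _ => hnn q)
    _ = ∑ a ∈ u.image Prod.fst, ∑ b ∈ u.image Prod.snd, μ b * auxM L b a :=
        Finset.sum_product _ _ _
    _ = ∑ b ∈ u.image Prod.snd, ∑ a ∈ u.image Prod.fst, μ b * auxM L b a :=
        Finset.sum_comm
    _ ≤ ∑ b ∈ u.image Prod.snd, μ b := by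
        refine Finset.sum_le_sum fun b _ => ?_
        rw [← Finset.mul_sum]
        exact mul_le_of_le_one_right (hμ0 b) (auxM_sum_fin_le hWF b _)
    _ ≤ ∑' b, μ b := Summable.sum_le_tsum _ (fun b _ => hμ0 b) hμsum
    _ = 1 := hμ1

lemma g_summable {L : PLTS S A} (hWF : L.WF) {μ : S → ℝ} (hμ0 : ∀ t, 0 ≤ μ t)
    (hμsum : Summable μ) (hμ1 : (∑' t, μ t) = 1) :
    Summable (fun q : S × S => μ q.2 * auxM L q.2 q.1) :=
  summable_of_sum_le (fun q => mul_nonneg (hμ0 q.2) (auxM_nonneg hWF q.2 q.1))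
    (g_sum_le hWF hμ0 hμsum hμ1)

lemma eds_nonneg {L : PLTS S A} (hWF : L.WF) {μ : S → ℝ} (hμ0 : ∀ t, 0 ≤ μ t) (s' : S) :
    0 ≤ L.extDistState μ s' := by
  rw [eds_eq]
  exact tsum_nonneg fun s'' => mul_nonneg (hμ0 s'') (auxM_nonneg hWF s'' s')

lemma eds_summable {L : PLTS S A} (hWF : L.WF) {μ : S → ℝ} (hμ0 : ∀ t, 0 ≤ μ t)
    (hμsum : Summable μ) (hμ1 : (∑' t, μ t) = 1) :
    Summable (fun s' => L.extDistState μ s') :=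
  ((g_summable hWF hμ0 hμsum hμ1).prod).congr fun s' => (eds_eq μ s').symm

lemma eds_tsum_le {L : PLTS S A} (hWF : L.WF) {μ : S → ℝ} (hμ0 : ∀ t, 0 ≤ μ t)
    (hμsum : Summable μ) (hμ1 : (∑' t, μ t) = 1) :
    ∑' s', L.extDistState μ s' ≤ 1 := by
  calc ∑' s', L.extDistState μ s'
      = ∑' s', ∑' s'', μ s'' * auxM L s'' s' := tsum_congr fun s' => eds_eq μ s'
    _ = ∑' q : S × S, μ q.2 * auxM L q.2 q.1 :=
        (Summable.tsum_prod (g_summable hWF hμ0 hμsum hμ1)).symm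
    _ ≤ 1 := Summable.tsum_le_of_sum_le (g_summable hWF hμ0 hμsum hμ1) (g_sum_le hWF hμ0 hμsum hμ1)

end AuxLemmas5
section Statements

open PLTS

variable {S : Type} {A : Type}

lemma extDist_some {L : PLTS S A} (μ : S → ℝ) (s' : S) :
    L.extDist μ (some s') = L.extDistState μ s' := rfl

lemma extDist_none {L : PLTS S A} (μ : S → ℝ) :
    L.extDist μ none = 1 - ∑' s', L.extDistState μ s' := rfl

theorem stmt2 [Countable S] [Countable A] (L : PLTS S A) (hWF : L.WF)
    (s : S) (a : A) (ν : Option S → ℝ) (h : L.ExtTrans s a ν) :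
    (∀ x : Option S, 0 ≤ ν x ∧ ν x ≤ 1) ∧ (∑' x : Option S, ν x) = 1 := by
  classical
  obtain ⟨μ, htr, hν⟩ := h
  obtain ⟨hμ0, hμsum, hμ1⟩ := mu_facts hWF htr
  subst hν
  have hT1 : (∑' s', L.extDistState μ s') ≤ 1 := eds_tsum_le hWF hμ0 hμsum hμ1
  have hT0 : (0:ℝ) ≤ ∑' s', L.extDistState μ s' := tsum_nonneg fun s' => eds_nonneg hWF hμ0 s'
  have hsumE : Summable (fun s' => L.extDistState μ s') := eds_summable hWF hμ0 hμsum hμ1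
  have hν0 : ∀ x, 0 ≤ L.extDist μ x := by
    intro x
    cases x with
    | none => rw [extDist_none]; linarith
    | some s' => rw [extDist_some]; exact eds_nonneg hWF hμ0 s'
  have hν1 : ∀ x, L.extDist μ x ≤ 1 := by
    intro x
    cases x with
    | none => rw [extDist_none]; linarith
    | some s' =>
      rw [extDist_some]
      exact le_trans (Summable.le_tsum hsumE s' fun j _ => eds_nonneg hWF hμ0 j) hT1
  refine ⟨fun x => ⟨hν0 x, hν1 x⟩, ?_⟩
  have hsubsum : ∀ u : Finset (Option S),
      ∑ x ∈ u, L.extDist μ x ≤ (1 - ∑' s', L.extDistState μ s') + ∑' s', L.extDistState μ s' := by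
    intro u
    set w := u.preimage some (Set.injOn_of_injective (Option.some_injective S)) with hw
    have hwle : ∑ s' ∈ w, L.extDist μ (some s') ≤ ∑' s', L.extDistState μ s' := by
      refine le_trans (le_of_eq (Finset.sum_congr rfl fun s' _ => extDist_some μ s')) ?_
      exact Summable.sum_le_tsum _ (fun s' _ => eds_nonneg hWF hμ0 s') hsumE
    have h1 : ∑ x ∈ u, L.extDist μ x ≤ ∑ x ∈ insert none u, L.extDist μ x :=
      Finset.sum_le_sum_of_subset_of_nonneg (Finset.subset_insert _ _) (fun x _ _ => hν0 x)
    have h2 : insert none u = insert none (u.erase none) := by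
      ext x
      simp only [Finset.mem_insert, Finset.mem_erase]
      tauto
    rw [h2, Finset.sum_insert (Finset.notMem_erase none u)] at h1
    have h3 : u.erase none = w.image some := by
      ext x
      cases x with
      | none => simp [hw]
      | some s' => simp [hw, Finset.mem_preimage]
    rw [h3, Finset.sum_image (fun a _ b _ he => Option.some_injective S he)] at h1
    rw [extDist_none] at h1
    linarith
  have hνsum : Summable (L.extDist μ) := summable_of_sum_le hν0 hsubsum
  rw [Summable.tsum_eq_add_tsum_ite hνsum none]
  have h4 : (∑' x : Option S, if x = none then 0 else L.extDist μ x)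
      = ∑' s', L.extDistState μ s' := by
    have hsupp : Function.support (fun x : Option S => if x = none then 0 else L.extDist μ x)
        ⊆ Set.range some := by
      intro x hx
      cases x with
      | none => simp [Function.mem_support] at hx
      | some s' => exact ⟨s', rfl⟩
    rw [← Function.Injective.tsum_eq (Option.some_injective S) hsupp]
    refine tsum_congr fun s' => ?_
    rw [if_neg (Option.some_ne_none s'), extDist_some]
  rw [h4, extDist_none]
  ring
end Statements
end Statements
end

section
/- Let A be a countable set of actions with disjoint subsets E and H. For e⃗ ∈ E* with e⃗ ≠ [], the set H*:γ'(e⃗) equals γ(e⃗), where γ(e⃗) = { a⃗ ∈ A* : the restriction of a⃗ to E equals e⃗ and the last element of a⃗ equals the last element of e⃗ }, γ'(e⃗) = { a⃗ ∈ γ(e⃗) : a⃗ = [] or the first element of a⃗ is not in H }, and H*:X = { h⃗ ++ a⃗ : h⃗ ∈ H*, a⃗ ∈ X }. -/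
open scoped Classical

section Statements

open PLTS

variable {S : Type} {A : Type}

theorem restrictList_append {A : Type*} (E : Set A) (l₁ l₂ : List A) :
    restrictList E (l₁ ++ l₂) = restrictList E l₁ ++ restrictList E l₂ := by
  induction l₁ with
  | nil => simp [restrictList]
  | cons a l ih =>
      simp only [List.cons_append, restrictList, ih]
      split <;> simp [ih]

theorem restrictList_eq_nil_of_H {A : Type*} (E H : Set A) (hdisj : Disjoint E H)
    (hv : List A) (hH : ∀ x ∈ hv, x ∈ H) : restrictList E hv = [] := by
  induction hv with
  | nil => rfl
  | cons a l ih =>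
      have ha : a ∉ E := fun hE => hdisj.le_bot ⟨hE, hH a List.mem_cons_self⟩
      simp only [restrictList, if_neg ha]
      exact ih fun x hx => hH x (List.mem_cons_of_mem a hx)

theorem restrictList_ne_nil_imp {A : Type*} (E : Set A) (l : List A)
    (h : restrictList E l ≠ []) : l ≠ [] := by
  intro hl; subst hl; exact h rfl

theorem stmt4 [Countable A] (E H : Set A) (hdisj : Disjoint E H)
    (evec : List A) (hE : ∀ e ∈ evec, e ∈ E) (hne : evec ≠ []) :
    {l : List A | ∃ hv : List A, (∀ x ∈ hv, x ∈ H) ∧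
        ∃ avec ∈ gammaSet E evec,
          (avec = [] ∨ ∃ (a : A) (avec' : List A), avec = a :: avec' ∧ a ∉ H) ∧
          l = hv ++ avec}
      = gammaSet E evec := by
  ext l
  simp only [Set.mem_setOf_eq]
  constructor
  · rintro ⟨hv, hH, avec, hmem, -, rfl⟩
    rcases hmem with ⟨rfl, -⟩ | ⟨-, hres, hlast⟩
    · exact absurd rfl hne
    refine Or.inr ⟨hne, ?_, ?_⟩
    · rw [restrictList_append, restrictList_eq_nil_of_H E H hdisj hv hH, List.nil_append, hres]
    · have havne : avec ≠ [] := restrictList_ne_nil_imp E avec (hres ▸ hne)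
      rw [List.getLast?_append_of_ne_nil hv havne, hlast]
  · rintro (⟨rfl, -⟩ | ⟨-, hres, hlast⟩)
    · exact absurd rfl hne
    · classical
      refine ⟨l.takeWhile (· ∈ H), ?_, l.dropWhile (· ∈ H), ?_, ?_, ?_⟩
      · intro x hx
        have := List.mem_takeWhile_imp hx
        simpa using this
      · have hres' : restrictList E (l.dropWhile (· ∈ H)) = evec := by
          have hsplit : l.takeWhile (· ∈ H) ++ l.dropWhile (· ∈ H) = l :=
            List.takeWhile_append_dropWhile
          have := restrictList_append E (l.takeWhile (· ∈ H)) (l.dropWhile (· ∈ H))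
          rw [hsplit, hres] at this
          rw [restrictList_eq_nil_of_H E H hdisj _ (fun x hx => by
            simpa using List.mem_takeWhile_imp hx), List.nil_append] at this
          exact this.symm
        have hdne : l.dropWhile (· ∈ H) ≠ [] :=
          restrictList_ne_nil_imp E _ (hres' ▸ hne)
        refine Or.inr ⟨hne, hres', ?_⟩
        calc (l.dropWhile (· ∈ H)).getLast?
            = (l.takeWhile (· ∈ H) ++ l.dropWhile (· ∈ H)).getLast? :=
              (List.getLast?_append_of_ne_nil _ hdne).symm
          _ = l.getLast? := by rw [List.takeWhile_append_dropWhile]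
          _ = evec.getLast? := hlast
      · have hres' : restrictList E (l.dropWhile (· ∈ H)) ≠ [] := by
          have hsplit : l.takeWhile (· ∈ H) ++ l.dropWhile (· ∈ H) = l :=
            List.takeWhile_append_dropWhile
          have := restrictList_append E (l.takeWhile (· ∈ H)) (l.dropWhile (· ∈ H))
          rw [hsplit, hres] at this
          rw [restrictList_eq_nil_of_H E H hdisj _ (fun x hx => by
            simpa using List.mem_takeWhile_imp hx), List.nil_append] at this
          rw [← this]; exact hne
        have hdne : l.dropWhile (· ∈ H) ≠ [] := restrictList_ne_nil_imp E _ hres'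
        right
        obtain ⟨a, avec', heq⟩ := List.exists_cons_of_ne_nil hdne
        refine ⟨a, avec', heq, ?_⟩
        have := List.head_dropWhile_not (fun x => decide (x ∈ H)) (l := l)
          (by simpa [heq] using hdne)
        simp only [heq] at this ⊢
        intro h; simp [h] at this
      · exact List.takeWhile_append_dropWhile.symm

end Statements
end

section
/- If an automaton M has ε-differential noninterference, then for all input sequences i⃗₁, i⃗₂ with Δ(i⃗₁,i⃗₂) ≤ n and all S ⊆ E*: Pr[⟦M⟧(i⃗₁)↾E ⊒ S] ≤ e^{n·ε} · Pr[⟦M⟧(i⃗₂)↾E ⊒ S]. -/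
open scoped Classical

section Statements

open PLTS

variable {S : Type} {A : Type}

lemma deltaLe_refl (L : PLTS S A) (n : ℕ) (i : List A) : L.DeltaLe n i i := by
  cases n with
  | zero => rfl
  | succ n => exact Or.inl rfl

lemma deltaLe_append (L : PLTS S A) (n : ℕ) (pre p₁ p₂ : List A)
    (h : L.DeltaLe n p₁ p₂) : L.DeltaLe n (pre ++ p₁) (pre ++ p₂) := by
  cases n with
  | zero =>
    have h' : p₁ = p₂ := h
    show pre ++ p₁ = pre ++ p₂
    rw [h']
  | succ n =>
    rcases h with rfl | ⟨pre', q₁, q₂, d, hd, hcase, h'⟩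
    · exact Or.inl rfl
    · refine Or.inr ⟨pre ++ pre', q₁, q₂, d, hd, ?_, h'⟩
      rcases hcase with ⟨e1, e2⟩ | ⟨e1, e2⟩
      · exact Or.inl ⟨by simp [e1], by simp [e2]⟩
      · exact Or.inr ⟨by simp [e1], by simp [e2]⟩

lemma exp_succ_mul (n : ℕ) (ε : ℝ) :
    Real.exp (((n : ℕ) + 1 : ℕ) * ε) = Real.exp ((n : ℝ) * ε) * Real.exp ε := by
  rw [← Real.exp_add]
  push_cast
  ring_nf

theorem stmt8 [Countable S] [Countable A] (L : PLTS S A) (hWF : L.WF) (s₀ : S) (ε : ℝ)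
    (hDNI : L.DiffNI s₀ ε) (n : ℕ) (i₁ i₂ : List A)
    (h₁ : ∀ a ∈ i₁, a ∈ L.inp) (h₂ : ∀ a ∈ i₂, a ∈ L.inp) (hΔ : L.DeltaLe n i₁ i₂)
    (T : Set (List A)) (hT : ∀ e ∈ T, ∀ a ∈ e, a ∈ L.obs) :
    L.obsSetProb s₀ i₁ T ≤ Real.exp (n * ε) * L.obsSetProb s₀ i₂ T := by
  induction n generalizing i₁ i₂ with
  | zero =>
    have h : i₁ = i₂ := hΔ
    subst h
    simp
  | succ n ih =>
    rcases hΔ with rfl | ⟨pre, p₁, p₂, d, hd, hcase, hΔ'⟩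
    · -- equal case: P ≤ e^{nε} P ≤ e^{nε} (e^ε P)
      have hstep := hDNI i₁ i₁ h₁ h₁ (Or.inl rfl) T hT
      have hih := ih i₁ i₁ h₁ h₁ (deltaLe_refl L n i₁)
      calc L.obsSetProb s₀ i₁ T ≤ Real.exp (n * ε) * L.obsSetProb s₀ i₁ T := hih
        _ ≤ Real.exp (n * ε) * (Real.exp ε * L.obsSetProb s₀ i₁ T) :=
            mul_le_mul_of_nonneg_left hstep (Real.exp_nonneg _)
        _ = Real.exp (((n : ℕ) + 1 : ℕ) * ε) * L.obsSetProb s₀ i₁ T := by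
            rw [exp_succ_mul]; ring
    · rcases hcase with ⟨e1, e2⟩ | ⟨e1, e2⟩
      · -- i₁ = pre ++ d :: p₁, i₂ = pre ++ p₂; mid := pre ++ p₁
        have hmid : ∀ a ∈ pre ++ p₁, a ∈ L.inp := by
          intro a ha
          apply h₁; rw [e1]; simp at ha ⊢; tauto
        have hadj : L.AdjOne i₁ (pre ++ p₁) := Or.inr ⟨pre, p₁, d, hd, Or.inl ⟨e1, rfl⟩⟩
        have hstep := hDNI i₁ (pre ++ p₁) h₁ hmid hadj T hT
        have hih := ih (pre ++ p₁) i₂ hmid h₂ (e2 ▸ deltaLe_append L n pre p₁ p₂ hΔ')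
        calc L.obsSetProb s₀ i₁ T ≤ Real.exp ε * L.obsSetProb s₀ (pre ++ p₁) T := hstep
          _ ≤ Real.exp ε * (Real.exp (n * ε) * L.obsSetProb s₀ i₂ T) :=
              mul_le_mul_of_nonneg_left hih (Real.exp_nonneg _)
          _ = Real.exp (((n : ℕ) + 1 : ℕ) * ε) * L.obsSetProb s₀ i₂ T := by
              rw [exp_succ_mul]; ring
      · -- i₂ = pre ++ d :: p₂, i₁ = pre ++ p₁; mid := pre ++ p₂
        have hmid : ∀ a ∈ pre ++ p₂, a ∈ L.inp := by
          intro a ha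
          apply h₂; rw [e1]; simp at ha ⊢; tauto
        have hadj : L.AdjOne (pre ++ p₂) i₂ := Or.inr ⟨pre, p₂, d, hd, Or.inr ⟨e1, rfl⟩⟩
        have hstep := hDNI (pre ++ p₂) i₂ hmid h₂ hadj T hT
        have hih := ih i₁ (pre ++ p₂) h₁ hmid (e2 ▸ deltaLe_append L n pre p₁ p₂ hΔ')
        calc L.obsSetProb s₀ i₁ T ≤ Real.exp (n * ε) * L.obsSetProb s₀ (pre ++ p₂) T := hih
          _ ≤ Real.exp (n * ε) * (Real.exp ε * L.obsSetProb s₀ i₂ T) :=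
              mul_le_mul_of_nonneg_left hstep (Real.exp_nonneg _)
          _ = Real.exp (((n : ℕ) + 1 : ℕ) * ε) * L.obsSetProb s₀ i₂ T := by
              rw [exp_succ_mul]; ring

end Statements
end

section
/- For every probabilistic labeled transition system L, every ε-unwinding family R^· for L, every ε' ∈ [0,ε], all x₁, x₂ ∈ S_⊥ with x₁ R^{ε'} x₂, every i⃗ ∈ I*, and every e⃗ ∈ E*: Pr[⟦⟨L,x₁⟩⟧(i⃗)↾E ⊒ e⃗] ≤ e^{ε'} · Pr[⟦⟨L,x₂⟩⟧(i⃗)↾E ⊒ e⃗] and Pr[⟦⟨L,x₂⟩⟧(i⃗)↾E ⊒ e⃗] ≤ e^{ε'} · Pr[⟦⟨L,x₁⟩⟧(i⃗)↾E ⊒ e⃗]. -/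
open scoped Classical

open scoped ENNReal

namespace PLTS

variable {S : Type*} {A : Type*} (L : PLTS S A)

/-- ENNReal version of `traceProb`. -/
noncomputable def traceProbE : List A → S → List A → S → ℝ≥0∞
  | [], s, _, s' => if s' = s then 1 else 0
  | a :: avec, s, ivec, s' =>
    if a ∈ L.inp then
      match ivec with
      | [] => 0
      | i :: ivec' =>
        if i = a then
          match L.trans s a with
          | some μ => ∑' s'' : S, ENNReal.ofReal (μ s'') * traceProbE avec s'' ivec' s'
          | none => 0
        else 0
    else
      match L.trans s a with
      | some μ => ∑' s'' : S, ENNReal.ofReal (μ s'') * traceProbE avec s'' ivec s'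
      | none => 0

lemma traceProbE_nil (s ivec s') : L.traceProbE [] s ivec s' = if s' = s then 1 else 0 := rfl

lemma traceProbE_inp_nil {a : A} (ha : a ∈ L.inp) (l : List A) (s s') :
    L.traceProbE (a :: l) s [] s' = 0 := by
  simp [traceProbE, ha]

lemma traceProbE_inp_ne {a i : A} (ha : a ∈ L.inp) (hne : i ≠ a) (l iv : List A) (s s') :
    L.traceProbE (a :: l) s (i :: iv) s' = 0 := by
  simp [traceProbE, ha, hne]

lemma traceProbE_inp_some {a : A} {μ : S → ℝ} (ha : a ∈ L.inp) {s : S}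
    (hμ : L.trans s a = some μ) (l iv : List A) (s') :
    L.traceProbE (a :: l) s (a :: iv) s' = ∑' s'' : S, ENNReal.ofReal (μ s'') * L.traceProbE l s'' iv s' := by
  simp [traceProbE, ha, hμ]

lemma traceProbE_out_some {a : A} {μ : S → ℝ} (ha : a ∉ L.inp) {s : S}
    (hμ : L.trans s a = some μ) (l iv : List A) (s') :
    L.traceProbE (a :: l) s iv s' = ∑' s'' : S, ENNReal.ofReal (μ s'') * L.traceProbE l s'' iv s' := by
  simp only [traceProbE, if_neg ha, hμ]

lemma traceProbE_trans_none {a : A} {s : S} (h : L.trans s a = none) (l iv : List A) (s') :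
    L.traceProbE (a :: l) s iv s' = 0 := by
  by_cases ha : a ∈ L.inp
  · cases iv with
    | nil => simp [traceProbE, ha]
    | cons i iv =>
      by_cases hia : i = a
      · simp [traceProbE, ha, hia, h]
      · simp [traceProbE, ha, hia]
  · simp only [traceProbE, if_neg ha, h]

/-- corresponding unfolding lemmas for the real `traceProb` -/
lemma traceProb_nil (s ivec s') : L.traceProb [] s ivec s' = if s' = s then 1 else 0 := rfl

lemma traceProb_inp_nil {a : A} (ha : a ∈ L.inp) (l : List A) (s s') :
    L.traceProb (a :: l) s [] s' = 0 := by
  simp [traceProb, ha]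

lemma traceProb_inp_ne {a i : A} (ha : a ∈ L.inp) (hne : i ≠ a) (l iv : List A) (s s') :
    L.traceProb (a :: l) s (i :: iv) s' = 0 := by
  simp [traceProb, ha, hne]

lemma traceProb_inp_some {a : A} {μ : S → ℝ} (ha : a ∈ L.inp) {s : S}
    (hμ : L.trans s a = some μ) (l iv : List A) (s') :
    L.traceProb (a :: l) s (a :: iv) s' = ∑' s'' : S, μ s'' * L.traceProb l s'' iv s' := by
  simp [traceProb, ha, hμ]

lemma traceProb_out_some {a : A} {μ : S → ℝ} (ha : a ∉ L.inp) {s : S}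
    (hμ : L.trans s a = some μ) (l iv : List A) (s') :
    L.traceProb (a :: l) s iv s' = ∑' s'' : S, μ s'' * L.traceProb l s'' iv s' := by
  simp only [traceProb, if_neg ha, hμ]

lemma traceProb_trans_none {a : A} {s : S} (h : L.trans s a = none) (l iv : List A) (s') :
    L.traceProb (a :: l) s iv s' = 0 := by
  by_cases ha : a ∈ L.inp
  · cases iv with
    | nil => simp [traceProb, ha]
    | cons i iv =>
      by_cases hia : i = a
      · simp [traceProb, ha, hia, h]
      · simp [traceProb, ha, hia]
  · simp only [traceProb, if_neg ha, h]

end PLTS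
namespace PLTS

variable {S : Type*} {A : Type*} (L : PLTS S A)

lemma WF.mu_nonneg {L : PLTS S A} (hWF : L.WF) {s : S} {a : A} {μ : S → ℝ}
    (h : L.trans s a = some μ) : ∀ s', 0 ≤ μ s' :=
  (hWF.2.2.2.1 s a μ h).1

lemma WF.mu_tsum {L : PLTS S A} (hWF : L.WF) {s : S} {a : A} {μ : S → ℝ}
    (h : L.trans s a = some μ) : ∑' s', μ s' = 1 :=
  (hWF.2.2.2.1 s a μ h).2

lemma WF.mu_summable {L : PLTS S A} (hWF : L.WF) {s : S} {a : A} {μ : S → ℝ}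
    (h : L.trans s a = some μ) : Summable μ := by
  by_contra hs
  have := tsum_eq_zero_of_not_summable hs
  rw [hWF.mu_tsum h] at this
  norm_num at this

lemma WF.mu_tsumE {L : PLTS S A} (hWF : L.WF) {s : S} {a : A} {μ : S → ℝ}
    (h : L.trans s a = some μ) : ∑' s', ENNReal.ofReal (μ s') = 1 := by
  rw [← ENNReal.ofReal_tsum_of_nonneg (hWF.mu_nonneg h) (hWF.mu_summable h),
    hWF.mu_tsum h, ENNReal.ofReal_one]

private lemma tsum_swap_step {μ : S → ℝ} (F : S → S → ℝ≥0∞) :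
    ∑' s' : S, ∑' s'' : S, ENNReal.ofReal (μ s'') * F s'' s'
      = ∑' s'' : S, ENNReal.ofReal (μ s'') * ∑' s' : S, F s'' s' := by
  rw [ENNReal.tsum_comm]
  exact tsum_congr fun s'' => ENNReal.tsum_mul_left

lemma traceProbE_le_one (hWF : L.WF) :
    ∀ (avec : List A) (s : S) (ivec : List A) (s' : S), L.traceProbE avec s ivec s' ≤ 1 := by
  intro avec
  induction avec with
  | nil => intro s ivec s'; rw [traceProbE_nil]; split <;> simp
  | cons a l ih =>
    intro s ivec s'
    have key : ∀ (μ : S → ℝ), L.trans s a = some μ → ∀ iv,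
        (∑' s'' : S, ENNReal.ofReal (μ s'') * L.traceProbE l s'' iv s') ≤ 1 := by
      intro μ hμ iv
      calc (∑' s'' : S, ENNReal.ofReal (μ s'') * L.traceProbE l s'' iv s')
          ≤ ∑' s'' : S, ENNReal.ofReal (μ s'') * 1 :=
            ENNReal.tsum_le_tsum fun s'' => mul_le_mul_right (ih s'' iv s') _
        _ = 1 := by simpa using hWF.mu_tsumE hμ
    by_cases ha : a ∈ L.inp
    · cases ivec with
      | nil => rw [L.traceProbE_inp_nil ha]; exact zero_le_one
      | cons i iv =>
        by_cases hia : i = a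
        · subst hia
          cases hμ : L.trans s i with
          | none => rw [L.traceProbE_trans_none hμ]; exact zero_le_one
          | some μ => rw [L.traceProbE_inp_some ha hμ]; exact key μ hμ iv
        · rw [L.traceProbE_inp_ne ha hia]; exact zero_le_one
    · cases hμ : L.trans s a with
      | none => rw [L.traceProbE_trans_none hμ]; exact zero_le_one
      | some μ => rw [L.traceProbE_out_some ha hμ]; exact key μ hμ ivec

lemma traceProbE_ne_top (hWF : L.WF) (avec : List A) (s : S) (ivec : List A) (s' : S) :
    L.traceProbE avec s ivec s' ≠ ⊤ :=
  ne_top_of_le_ne_top ENNReal.one_ne_top (L.traceProbE_le_one hWF avec s ivec s')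

lemma traceProb_eq_toReal (hWF : L.WF) :
    ∀ (avec : List A) (s : S) (ivec : List A) (s' : S),
      L.traceProb avec s ivec s' = (L.traceProbE avec s ivec s').toReal := by
  intro avec
  induction avec with
  | nil =>
    intro s ivec s'; rw [traceProb_nil, traceProbE_nil]
    split <;> simp
  | cons a l ih =>
    intro s ivec s'
    have key : ∀ (μ : S → ℝ), L.trans s a = some μ → ∀ iv,
        (∑' s'' : S, μ s'' * L.traceProb l s'' iv s')
          = (∑' s'' : S, ENNReal.ofReal (μ s'') * L.traceProbE l s'' iv s').toReal := by
      intro μ hμ iv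
      rw [ENNReal.tsum_toReal_eq (fun s'' => ENNReal.mul_ne_top ENNReal.ofReal_ne_top
        (L.traceProbE_ne_top hWF l s'' iv s'))]
      refine tsum_congr fun s'' => ?_
      rw [ENNReal.toReal_mul, ENNReal.toReal_ofReal (hWF.mu_nonneg hμ s''), ih s'' iv s']
    by_cases ha : a ∈ L.inp
    · cases ivec with
      | nil => rw [L.traceProb_inp_nil ha, L.traceProbE_inp_nil ha]; simp
      | cons i iv =>
        by_cases hia : i = a
        · subst hia
          cases hμ : L.trans s i with
          | none => rw [L.traceProb_trans_none hμ, L.traceProbE_trans_none hμ]; simp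
          | some μ => rw [L.traceProb_inp_some ha hμ, L.traceProbE_inp_some ha hμ]; exact key μ hμ iv
        · rw [L.traceProb_inp_ne ha hia, L.traceProbE_inp_ne ha hia]; simp
    · cases hμ : L.trans s a with
      | none => rw [L.traceProb_trans_none hμ, L.traceProbE_trans_none hμ]; simp
      | some μ => rw [L.traceProb_out_some ha hμ, L.traceProbE_out_some ha hμ]; exact key μ hμ ivec

/-- ENNReal version of `prefixProb`. -/
noncomputable def prefixProbE (s : S) (ivec avec : List A) : ℝ≥0∞ :=
  ∑' s' : S, L.traceProbE avec s ivec s'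

lemma prefixProbE_nil (s : S) (ivec : List A) : L.prefixProbE s ivec [] = 1 := by
  rw [prefixProbE]
  simp only [traceProbE_nil]
  exact tsum_ite_eq s 1

lemma prefixProbE_trans_none {a : A} {s : S} (h : L.trans s a = none) (l iv : List A) :
    L.prefixProbE s iv (a :: l) = 0 := by
  rw [prefixProbE]
  simp [L.traceProbE_trans_none h]

lemma prefixProbE_inp_nil {a : A} (ha : a ∈ L.inp) (l : List A) (s : S) :
    L.prefixProbE s [] (a :: l) = 0 := by
  rw [prefixProbE]; simp [L.traceProbE_inp_nil ha]

lemma prefixProbE_inp_ne {a i : A} (ha : a ∈ L.inp) (hne : i ≠ a) (l iv : List A) (s : S) :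
    L.prefixProbE s (i :: iv) (a :: l) = 0 := by
  rw [prefixProbE]; simp [L.traceProbE_inp_ne ha hne]

lemma prefixProbE_inp_some {a : A} {μ : S → ℝ} (ha : a ∈ L.inp) {s : S}
    (hμ : L.trans s a = some μ) (l iv : List A) :
    L.prefixProbE s (a :: iv) (a :: l) = ∑' s'' : S, ENNReal.ofReal (μ s'') * L.prefixProbE s'' iv l := by
  rw [prefixProbE]
  simp only [L.traceProbE_inp_some ha hμ]
  exact tsum_swap_step _

lemma prefixProbE_out_some {a : A} {μ : S → ℝ} (ha : a ∉ L.inp) {s : S}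
    (hμ : L.trans s a = some μ) (l iv : List A) :
    L.prefixProbE s iv (a :: l) = ∑' s'' : S, ENNReal.ofReal (μ s'') * L.prefixProbE s'' iv l := by
  rw [prefixProbE]
  simp only [L.traceProbE_out_some ha hμ]
  exact tsum_swap_step _

lemma prefixProbE_le_one (hWF : L.WF) :
    ∀ (avec : List A) (s : S) (ivec : List A), L.prefixProbE s ivec avec ≤ 1 := by
  intro avec
  induction avec with
  | nil => intro s ivec; rw [prefixProbE_nil]
  | cons a l ih =>
    intro s ivec
    have key : ∀ (μ : S → ℝ), L.trans s a = some μ → ∀ iv,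
        (∑' s'' : S, ENNReal.ofReal (μ s'') * L.prefixProbE s'' iv l) ≤ 1 := by
      intro μ hμ iv
      calc (∑' s'' : S, ENNReal.ofReal (μ s'') * L.prefixProbE s'' iv l)
          ≤ ∑' s'' : S, ENNReal.ofReal (μ s'') * 1 :=
            ENNReal.tsum_le_tsum fun s'' => mul_le_mul_right (ih s'' iv) _
        _ = 1 := by simpa using hWF.mu_tsumE hμ
    by_cases ha : a ∈ L.inp
    · cases ivec with
      | nil => rw [L.prefixProbE_inp_nil ha]; exact zero_le_one
      | cons i iv =>
        by_cases hia : i = a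
        · subst hia
          cases hμ : L.trans s i with
          | none => rw [L.prefixProbE_trans_none hμ]; exact zero_le_one
          | some μ => rw [L.prefixProbE_inp_some ha hμ]; exact key μ hμ iv
        · rw [L.prefixProbE_inp_ne ha hia]; exact zero_le_one
    · cases hμ : L.trans s a with
      | none => rw [L.prefixProbE_trans_none hμ]; exact zero_le_one
      | some μ => rw [L.prefixProbE_out_some ha hμ]; exact key μ hμ ivec

lemma prefixProbE_ne_top (hWF : L.WF) (avec : List A) (s : S) (ivec : List A) :
    L.prefixProbE s ivec avec ≠ ⊤ :=
  ne_top_of_le_ne_top ENNReal.one_ne_top (L.prefixProbE_le_one hWF avec s ivec)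

lemma prefixProb_eq_toReal (hWF : L.WF) (s : S) (ivec avec : List A) :
    L.prefixProb s ivec avec = (L.prefixProbE s ivec avec).toReal := by
  rw [prefixProb, prefixProbE,
    ENNReal.tsum_toReal_eq (fun s' => L.traceProbE_ne_top hWF avec s ivec s')]
  exact tsum_congr fun s' => L.traceProb_eq_toReal hWF avec s ivec s'

/-- ENNReal version of `obsProb`. -/
noncomputable def obsProbE (s : S) (ivec evec : List A) : ℝ≥0∞ :=
  ∑' l : List A, if l ∈ gammaSet L.obs evec then L.prefixProbE s ivec l else 0

lemma obsProb_eq_toReal (hWF : L.WF) (s : S) (ivec evec : List A) :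
    L.obsProb s ivec evec = (L.obsProbE s ivec evec).toReal := by
  rw [obsProb, obsProbE]
  have h1 : (∑' l : List A, if l ∈ gammaSet L.obs evec then L.prefixProbE s ivec l else 0)
      = ∑' l : L.gamma evec, L.prefixProbE s ivec l.1 := by
    rw [tsum_subtype (L.gamma evec) (fun l => L.prefixProbE s ivec l)]
    refine tsum_congr fun l => ?_
    rw [Set.indicator_apply]
    rfl
  rw [h1, ENNReal.tsum_toReal_eq (fun l => L.prefixProbE_ne_top hWF _ s ivec)]
  exact tsum_congr fun l => L.prefixProb_eq_toReal hWF s ivec l.1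

/-- ENNReal version of `obsProbX`. -/
noncomputable def obsProbXE (x : Option S) (ivec evec : List A) : ℝ≥0∞ :=
  match x with
  | some s => L.obsProbE s ivec evec
  | none => if evec = [] then 1 else 0

lemma obsProbX_eq_toReal (hWF : L.WF) (x : Option S) (ivec evec : List A) :
    L.obsProbX x ivec evec = (L.obsProbXE x ivec evec).toReal := by
  cases x with
  | some s => exact L.obsProb_eq_toReal hWF s ivec evec
  | none =>
    show (if evec = [] then (1:ℝ) else 0) = _
    by_cases h : evec = [] <;> simp [obsProbXE, h]

end PLTS
section Lists

variable {A : Type*} {E : Set A}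

lemma restrictList_cons_mem {a : A} (h : a ∈ E) (l : List A) :
    restrictList E (a :: l) = a :: restrictList E l := by
  simp [restrictList, h]

lemma restrictList_cons_not_mem {a : A} (h : a ∉ E) (l : List A) :
    restrictList E (a :: l) = restrictList E l := by
  simp [restrictList, h]

lemma restrictList_eq_nil_iff (l : List A) :
    restrictList E l = [] ↔ ∀ x ∈ l, x ∉ E := by
  induction l with
  | nil => simp [restrictList]
  | cons a l ih =>
    by_cases h : a ∈ E
    · rw [restrictList_cons_mem h]
      simp only [List.mem_cons]
      constructor
      · intro hc; exact absurd hc (List.cons_ne_nil _ _)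
      · intro hc; exact absurd h (hc a (Or.inl rfl))
    · rw [restrictList_cons_not_mem h, ih]
      constructor
      · intro hc x hx
        rcases List.mem_cons.1 hx with rfl | hx
        · exact h
        · exact hc x hx
      · intro hc x hx; exact hc x (List.mem_cons_of_mem _ hx)

lemma getLast?_cons_of_ne_nil {a : A} {l : List A} (h : l ≠ []) :
    (a :: l).getLast? = l.getLast? := by
  cases l with
  | nil => exact absurd rfl h
  | cons b l => exact List.getLast?_cons_cons

lemma mem_gammaSet_nil_iff (l : List A) : l ∈ gammaSet E [] ↔ l = [] := by
  simp [gammaSet]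

lemma mem_gammaSet_ne_nil {l : List A} {e : A} {ev : List A}
    (h : l ∈ gammaSet E (e :: ev)) : restrictList E l = e :: ev := by
  rcases h with ⟨hc, _⟩ | ⟨_, h1, _⟩
  · exact absurd hc (List.cons_ne_nil _ _)
  · exact h1

lemma nil_not_mem_gammaSet {e : A} {ev : List A} : [] ∉ gammaSet E (e :: ev) := by
  intro h
  have := mem_gammaSet_ne_nil h
  simp [restrictList] at this

lemma cons_mem_gammaSet_not_mem {a : A} (ha : a ∉ E) {rest : List A} {e : A} {ev : List A} :
    (a :: rest) ∈ gammaSet E (e :: ev) ↔ rest ∈ gammaSet E (e :: ev) := by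
  constructor
  · rintro (⟨hc, _⟩ | ⟨_, h1, h2⟩)
    · exact absurd hc (List.cons_ne_nil _ _)
    · rw [restrictList_cons_not_mem ha] at h1
      have hrest : rest ≠ [] := by
        intro hr; rw [hr] at h1; exact (List.cons_ne_nil _ _) h1.symm
      refine Or.inr ⟨List.cons_ne_nil _ _, h1, ?_⟩
      rwa [getLast?_cons_of_ne_nil hrest] at h2
  · rintro (⟨hc, _⟩ | ⟨_, h1, h2⟩)
    · exact absurd hc (List.cons_ne_nil _ _)
    · have hrest : rest ≠ [] := by
        intro hr; rw [hr] at h1; exact (List.cons_ne_nil _ _) h1.symm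
      exact Or.inr ⟨List.cons_ne_nil _ _, by rwa [restrictList_cons_not_mem ha],
        by rwa [getLast?_cons_of_ne_nil hrest]⟩

lemma cons_mem_gammaSet_mem_ne {a e : A} (ha : a ∈ E) (hne : a ≠ e) {rest : List A} {ev : List A} :
    (a :: rest) ∉ gammaSet E (e :: ev) := by
  rintro (⟨hc, _⟩ | ⟨_, h1, _⟩)
  · exact absurd hc (List.cons_ne_nil _ _)
  · rw [restrictList_cons_mem ha] at h1
    exact hne (List.head_eq_of_cons_eq h1)

lemma cons_mem_gammaSet_singleton {a : A} (ha : a ∈ E) {rest : List A} :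
    (a :: rest) ∈ gammaSet E [a] ↔ rest = [] := by
  constructor
  · rintro (⟨hc, _⟩ | ⟨_, h1, h2⟩)
    · exact absurd hc (List.cons_ne_nil _ _)
    · rw [restrictList_cons_mem ha] at h1
      have hr : restrictList E rest = [] := List.tail_eq_of_cons_eq h1
      by_contra hrne
      rw [getLast?_cons_of_ne_nil hrne] at h2
      simp only [List.getLast?_singleton] at h2
      have hmem : a ∈ rest := List.mem_of_mem_getLast? (by rw [h2]; rfl)
      exact ((restrictList_eq_nil_iff rest).1 hr a hmem) ha
  · rintro rfl
    exact Or.inr ⟨List.cons_ne_nil _ _, by rw [restrictList_cons_mem ha]; simp [restrictList], rfl⟩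

lemma cons_mem_gammaSet_mem_cons {a : A} (ha : a ∈ E) {rest ev : List A} (hev : ev ≠ []) :
    (a :: rest) ∈ gammaSet E (a :: ev) ↔ rest ∈ gammaSet E ev := by
  obtain ⟨e', ev', rfl⟩ : ∃ e' ev', ev = e' :: ev' := by
    cases ev with
    | nil => exact absurd rfl hev
    | cons e' ev' => exact ⟨e', ev', rfl⟩
  constructor
  · rintro (⟨hc, _⟩ | ⟨_, h1, h2⟩)
    · exact absurd hc (List.cons_ne_nil _ _)
    · rw [restrictList_cons_mem ha] at h1
      have h1' : restrictList E rest = e' :: ev' := List.tail_eq_of_cons_eq h1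
      have hrne : rest ≠ [] := by
        intro hr; rw [hr] at h1'; exact (List.cons_ne_nil _ _) h1'.symm
      rw [getLast?_cons_of_ne_nil hrne, getLast?_cons_of_ne_nil (List.cons_ne_nil _ _)] at h2
      exact Or.inr ⟨List.cons_ne_nil _ _, h1', h2⟩
  · rintro (⟨hc, _⟩ | ⟨_, h1, h2⟩)
    · exact absurd hc (List.cons_ne_nil _ _)
    · have hrne : rest ≠ [] := by
        intro hr; rw [hr] at h1; simp [restrictList] at h1
      refine Or.inr ⟨List.cons_ne_nil _ _, by rw [restrictList_cons_mem ha, h1], ?_⟩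
      rw [getLast?_cons_of_ne_nil hrne, getLast?_cons_of_ne_nil (List.cons_ne_nil _ _)]
      exact h2

lemma append_mem_gammaSet {hl rest : List A} (hh : ∀ x ∈ hl, x ∉ E) {e : A} {ev : List A} :
    (hl ++ rest) ∈ gammaSet E (e :: ev) ↔ rest ∈ gammaSet E (e :: ev) := by
  induction hl with
  | nil => simp
  | cons a hl ih =>
    rw [List.cons_append, cons_mem_gammaSet_not_mem (hh a (List.mem_cons_self))]
    exact ih fun x hx => hh x (List.mem_cons_of_mem _ hx)

/-- splitting a list at the first element not satisfying `P` -/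
noncomputable def splitAt1 (P : A → Prop) : List A → List A × List A
  | [] => ([], [])
  | a :: l => if P a then ((a :: (splitAt1 P l).1), (splitAt1 P l).2) else ([], a :: l)

lemma splitAt1_append (P : A → Prop) (l : List A) :
    (splitAt1 P l).1 ++ (splitAt1 P l).2 = l := by
  induction l with
  | nil => simp [splitAt1]
  | cons a l ih =>
    by_cases h : P a
    · simp [splitAt1, h, ih]
    · simp [splitAt1, h]

lemma splitAt1_fst (P : A → Prop) (l : List A) : ∀ x ∈ (splitAt1 P l).1, P x := by
  induction l with
  | nil => simp [splitAt1]
  | cons a l ih =>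
    by_cases h : P a
    · simp only [splitAt1, if_pos h]
      intro x hx
      rcases List.mem_cons.1 hx with rfl | hx
      · exact h
      · exact ih x hx
    · simp [splitAt1, h]

lemma splitAt1_snd (P : A → Prop) (l : List A) :
    ∀ a t, (splitAt1 P l).2 = a :: t → ¬ P a := by
  induction l with
  | nil => simp [splitAt1]
  | cons b l ih =>
    by_cases h : P b
    · simp only [splitAt1, if_pos h]
      exact ih
    · simp only [splitAt1, if_neg h]
      intro a t hat
      obtain rfl : b = a := (List.cons.injEq _ _ _ _ ▸ hat).1
      exact h

lemma split_unique {P : A → Prop} :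
    ∀ (hl1 : List A) {r1 hl2 r2 : List A}, (∀ x ∈ hl1, P x) → (∀ x ∈ hl2, P x) →
      (∀ a t, r1 = a :: t → ¬ P a) → (∀ a t, r2 = a :: t → ¬ P a) →
      hl1 ++ r1 = hl2 ++ r2 → hl1 = hl2 ∧ r1 = r2 := by
  intro hl1
  induction hl1 with
  | nil =>
    intro r1 hl2 r2 _ h2 hr1 _ heq
    cases hl2 with
    | nil => exact ⟨rfl, heq⟩
    | cons b hl2 =>
      simp only [List.nil_append] at heq
      exact absurd (h2 b (List.mem_cons_self)) (hr1 b _ heq)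
  | cons a hl1 ih =>
    intro r1 hl2 r2 h1 h2 hr1 hr2 heq
    cases hl2 with
    | nil =>
      simp only [List.nil_append] at heq
      exact absurd (h1 a (List.mem_cons_self)) (hr2 a _ heq.symm)
    | cons b hl2 =>
      simp only [List.cons_append, List.cons.injEq] at heq
      obtain ⟨rfl, heq⟩ := heq
      obtain ⟨h₁, h₂⟩ := ih (fun x hx => h1 x (List.mem_cons_of_mem _ hx))
        (fun x hx => h2 x (List.mem_cons_of_mem _ hx)) hr1 hr2 heq
      exact ⟨by rw [h₁], h₂⟩

end Lists
namespace PLTS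

variable {S : Type*} {A : Type*} (L : PLTS S A)

lemma WF.hid_not_inp {L : PLTS S A} (hWF : L.WF) {h : A} (hh : h ∈ L.hid) : h ∉ L.inp :=
  fun hin => Set.disjoint_left.1 hWF.2.2.1 hin (Or.inr hh)

lemma WF.hid_not_obs {L : PLTS S A} (hWF : L.WF) {h : A} (hh : h ∈ L.hid) : h ∉ L.obs := by
  rintro (hq | hr)
  · exact hWF.hid_not_inp hh (Or.inr hq)
  · exact Set.disjoint_left.1 hWF.2.1 hr hh

lemma WF.dat_not_obs {L : PLTS S A} (hWF : L.WF) {d : A} (hd : d ∈ L.dat) : d ∉ L.obs := by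
  rintro (hq | hr)
  · exact Set.disjoint_left.1 hWF.1 hd hq
  · exact Set.disjoint_left.1 hWF.2.2.1 (Or.inl hd) (Or.inl hr)

lemma WF.only_enabled {L : PLTS S A} (hWF : L.WF) {s : S} {o : A} {μ : S → ℝ}
    (ho : o ∈ L.out) (hμ : L.trans s o = some μ) {b : A} (hb : b ≠ o) : L.trans s b = none := by
  cases h : L.trans s b with
  | none => rfl
  | some μ' => exact absurd (hWF.2.2.2.2.1 s b o μ μ' ho hμ h) hb

/-- From an `H`-enabled state, any action whose label is not hidden has zero trace prob. -/
lemma traceProbE_henabled {L : PLTS S A} (hWF : L.WF) {t : S} {h : A} {μ : S → ℝ}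
    (hh : h ∈ L.hid) (hμ : L.trans t h = some μ) {a : A} (ha : a ∉ L.hid)
    (l iv : List A) (s' : S) : L.traceProbE (a :: l) t iv s' = 0 := by
  refine L.traceProbE_trans_none (hWF.only_enabled (Or.inr hh) hμ ?_) l iv s'
  intro hab
  rw [hab] at ha
  exact ha hh

private lemma tsum_ite_one_mul {α : Type*} (f : α → ℝ≥0∞) (s : α) :
    ∑' t, (if t = s then (1:ℝ≥0∞) else 0) * f t = f s := by
  have : ∀ t, (if t = s then (1:ℝ≥0∞) else 0) * f t = if t = s then f s else 0 := by
    intro t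
    by_cases h : t = s
    · subst h; simp
    · simp [h]
  rw [tsum_congr this]
  exact tsum_ite_eq s (fun _ => f s)

private lemma tsum_swap_mul {α β : Type*} (F : α → ℝ≥0∞) (G : α → β → ℝ≥0∞) :
    ∑' s' : β, ∑' t : α, F t * G t s' = ∑' t : α, F t * ∑' s' : β, G t s' := by
  rw [ENNReal.tsum_comm]
  exact tsum_congr fun t => ENNReal.tsum_mul_left

/-- concatenation of an uninterpreted prefix of non-input actions -/
lemma traceProbE_append {L : PLTS S A} :
    ∀ (hl : List A), (∀ x ∈ hl, x ∉ L.inp) → ∀ (rest iv : List A) (s s' : S),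
      L.traceProbE (hl ++ rest) s iv s'
        = ∑' t : S, L.traceProbE hl s [] t * L.traceProbE rest t iv s' := by
  intro hl
  induction hl with
  | nil =>
    intro _ rest iv s s'
    simp only [List.nil_append, traceProbE_nil]
    exact (tsum_ite_one_mul (fun t => L.traceProbE rest t iv s') s).symm
  | cons h hl ih =>
    intro hni rest iv s s'
    have hh : h ∉ L.inp := hni h (List.mem_cons_self)
    cases hμ : L.trans s h with
    | none =>
      rw [List.cons_append, L.traceProbE_trans_none hμ]
      symm
      simp [L.traceProbE_trans_none hμ]
    | some μ =>
      rw [List.cons_append, L.traceProbE_out_some hh hμ]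
      have h1 : ∀ s₃ : S, ENNReal.ofReal (μ s₃) * L.traceProbE (hl ++ rest) s₃ iv s'
          = ∑' t : S, ENNReal.ofReal (μ s₃) * (L.traceProbE hl s₃ [] t * L.traceProbE rest t iv s') := by
        intro s₃
        rw [ih (fun x hx => hni x (List.mem_cons_of_mem _ hx)) rest iv s₃ s', ENNReal.tsum_mul_left]
      rw [tsum_congr h1, ENNReal.tsum_comm]
      refine tsum_congr fun t => ?_
      rw [L.traceProbE_out_some hh hμ hl [] t, ← ENNReal.tsum_mul_right]
      exact tsum_congr fun s₃ => by ring

/-- the weight with which `t` is reached from `s` by a (maximal) sequence of hidden steps -/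
noncomputable def hwE (s t : S) : ℝ≥0∞ :=
  if L.HDisabled t then ∑' hl : List A, (if hl ∈ L.HSeq then L.traceProbE hl s [] t else 0) else 0

/-- the second component of a split has a non-hidden head -/
def NHid (rest : List A) : Prop := ∀ a t, rest = a :: t → a ∉ L.hid

end PLTS
namespace PLTS

variable {S : Type*} {A : Type*} (L : PLTS S A)

private lemma tsum_prod_factor {α β γ : Type*} (h : α → γ → ℝ≥0∞) (k : β → γ → ℝ≥0∞) :
    ∑' p : α × β, ∑' t, h p.1 t * k p.2 t = ∑' t, (∑' x, h x t) * (∑' y, k y t) := by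
  rw [ENNReal.tsum_prod']
  calc ∑' x, ∑' y, ∑' t, h x t * k y t
      = ∑' x, ∑' t, ∑' y, h x t * k y t := tsum_congr fun x => ENNReal.tsum_comm
    _ = ∑' x, ∑' t, h x t * ∑' y, k y t :=
        tsum_congr fun x => tsum_congr fun t => ENNReal.tsum_mul_left
    _ = ∑' t, ∑' x, h x t * ∑' y, k y t := ENNReal.tsum_comm
    _ = ∑' t, (∑' x, h x t) * ∑' y, k y t := tsum_congr fun t => ENNReal.tsum_mul_right

lemma hiddenUnfold (hWF : L.WF) {e : A} {ev : List A} (s : S) (ivec : List A) :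
    L.obsProbE s ivec (e :: ev) = ∑' t : S, L.hwE s t * L.obsProbE t ivec (e :: ev) := by
  classical
  have hcond : ∀ p : List A × List A,
      (((if p.1 ∈ L.HSeq then (1:ℝ≥0∞) else 0) *
        if (p.2 ∈ gammaSet L.obs (e :: ev) ∧ L.NHid p.2) then (1:ℝ≥0∞) else 0) *
        L.prefixProbE s ivec (p.1 ++ p.2)) ≠ 0 →
      p.1 ∈ L.HSeq ∧ p.2 ∈ gammaSet L.obs (e :: ev) ∧ L.NHid p.2 := by
    intro p hp
    by_cases h1 : p.1 ∈ L.HSeq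
    · by_cases h2 : p.2 ∈ gammaSet L.obs (e :: ev) ∧ L.NHid p.2
      · exact ⟨h1, h2⟩
      · simp [h2] at hp
    · simp [h1] at hp
  have stepA : L.obsProbE s ivec (e :: ev) = ∑' p : List A × List A,
      ((if p.1 ∈ L.HSeq then (1:ℝ≥0∞) else 0) *
        if (p.2 ∈ gammaSet L.obs (e :: ev) ∧ L.NHid p.2) then (1:ℝ≥0∞) else 0) *
        L.prefixProbE s ivec (p.1 ++ p.2) := by
    rw [obsProbE]
    refine tsum_eq_tsum_of_ne_zero_bij (fun p => p.1.1 ++ p.1.2) ?_ ?_ ?_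
    · rintro ⟨⟨hl1, r1⟩, hp⟩ ⟨⟨hl2, r2⟩, hq⟩ heq
      obtain ⟨hp1, hp2, hp3⟩ := hcond _ hp
      obtain ⟨hq1, hq2, hq3⟩ := hcond _ hq
      have := split_unique (P := (· ∈ L.hid)) hl1 (fun x hx => hp1 x hx) (fun x hx => hq1 x hx)
        hp3 hq3 heq
      simp only [Subtype.mk.injEq, Prod.mk.injEq]
      exact this
    · intro l hl
      have hfl : (if l ∈ gammaSet L.obs (e :: ev) then L.prefixProbE s ivec l else 0) ≠ 0 := hl
      by_cases hγl : l ∈ gammaSet L.obs (e :: ev)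
      swap
      · simp [hγl] at hfl
      rw [if_pos hγl] at hfl
      refine ⟨⟨(splitAt1 (· ∈ L.hid) l), ?_⟩, by simp [splitAt1_append]⟩
      have h1 : (splitAt1 (· ∈ L.hid) l).1 ∈ L.HSeq := fun x hx => splitAt1_fst _ l x hx
      have h3 : L.NHid (splitAt1 (· ∈ L.hid) l).2 := fun a t hat => splitAt1_snd _ l a t hat
      have h2 : (splitAt1 (· ∈ L.hid) l).2 ∈ gammaSet L.obs (e :: ev) := by
        have := append_mem_gammaSet (E := L.obs) (hl := (splitAt1 (· ∈ L.hid) l).1)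
          (rest := (splitAt1 (· ∈ L.hid) l).2)
          (fun x hx => hWF.hid_not_obs (splitAt1_fst _ l x hx)) (e := e) (ev := ev)
        rw [splitAt1_append] at this
        exact this.1 hγl
      show (_ * _) * _ ≠ 0
      rw [if_pos h1, if_pos ⟨h2, h3⟩, one_mul, one_mul, splitAt1_append]
      exact hfl
    · rintro ⟨⟨hl, rest⟩, hp⟩
      obtain ⟨h1, h2, h3⟩ := hcond _ hp
      have hmem : (hl ++ rest) ∈ gammaSet L.obs (e :: ev) :=
        (append_mem_gammaSet (fun x hx => hWF.hid_not_obs (h1 x hx))).2 h2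
      simp only [if_pos hmem, if_pos h1, if_pos (And.intro h2 h3), one_mul]
  have hgfact : ∀ p : List A × List A,
      (((if p.1 ∈ L.HSeq then (1:ℝ≥0∞) else 0) *
        if (p.2 ∈ gammaSet L.obs (e :: ev) ∧ L.NHid p.2) then (1:ℝ≥0∞) else 0) *
        L.prefixProbE s ivec (p.1 ++ p.2))
      = ∑' t : S, ((if p.1 ∈ L.HSeq then (1:ℝ≥0∞) else 0) * L.traceProbE p.1 s [] t) *
          ((if (p.2 ∈ gammaSet L.obs (e :: ev) ∧ L.NHid p.2) then (1:ℝ≥0∞) else 0) *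
            L.prefixProbE t ivec p.2) := by
    rintro ⟨hl, rest⟩
    by_cases h1 : hl ∈ L.HSeq
    · by_cases h2 : rest ∈ gammaSet L.obs (e :: ev) ∧ L.NHid rest
      · simp only [if_pos h1, if_pos h2, one_mul]
        rw [prefixProbE,
          tsum_congr (fun s' => traceProbE_append hl
            (fun x hx => hWF.hid_not_inp (h1 x hx)) rest ivec s s'),
          tsum_swap_mul]
        rfl
      · simp [h2]
    · simp [h1]
  rw [stepA, tsum_congr hgfact,
    tsum_prod_factor (fun hl t => (if hl ∈ L.HSeq then (1:ℝ≥0∞) else 0) * L.traceProbE hl s [] t)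
      (fun rest t => (if (rest ∈ gammaSet L.obs (e :: ev) ∧ L.NHid rest) then (1:ℝ≥0∞) else 0) *
        L.prefixProbE t ivec rest)]
  refine tsum_congr fun t => ?_
  by_cases ht : L.HDisabled t
  · have haT : (∑' hl : List A, (if hl ∈ L.HSeq then (1:ℝ≥0∞) else 0) * L.traceProbE hl s [] t)
        = L.hwE s t := by
      rw [hwE, if_pos ht]
      refine tsum_congr fun hl => ?_
      by_cases h : hl ∈ L.HSeq <;> simp [h]
    have hbT : (∑' rest : List A,
        (if (rest ∈ gammaSet L.obs (e :: ev) ∧ L.NHid rest) then (1:ℝ≥0∞) else 0) *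
          L.prefixProbE t ivec rest) = L.obsProbE t ivec (e :: ev) := by
      rw [obsProbE]
      refine tsum_congr fun rest => ?_
      by_cases hr : rest ∈ gammaSet L.obs (e :: ev)
      · by_cases hn : L.NHid rest
        · simp [hr, hn]
        · rw [if_neg (fun hc => hn hc.2), if_pos hr, zero_mul]
          have : ∃ a tl, rest = a :: tl ∧ a ∈ L.hid := by
            unfold NHid at hn
            push_neg at hn
            obtain ⟨a, tl, hat, ha⟩ := hn
            exact ⟨a, tl, hat, ha⟩
          obtain ⟨a, tl, rfl, hahid⟩ := this
          rw [L.prefixProbE_trans_none (ht a hahid)]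
      · simp [hr]
    rw [haT, hbT]
  · have haw : L.hwE s t = 0 := if_neg ht
    have hbT : (∑' rest : List A,
        (if (rest ∈ gammaSet L.obs (e :: ev) ∧ L.NHid rest) then (1:ℝ≥0∞) else 0) *
          L.prefixProbE t ivec rest) = 0 := by
      rw [ENNReal.tsum_eq_zero]
      intro rest
      by_cases hr : rest ∈ gammaSet L.obs (e :: ev) ∧ L.NHid rest
      · rw [if_pos hr, one_mul]
        obtain ⟨hγr, hnr⟩ := hr
        obtain ⟨a, tl, rfl⟩ : ∃ a tl, rest = a :: tl := by
          cases rest with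
          | nil => exact absurd hγr nil_not_mem_gammaSet
          | cons a tl => exact ⟨a, tl, rfl⟩
        have hna : a ∉ L.hid := hnr a tl rfl
        unfold HDisabled at ht
        push_neg at ht
        obtain ⟨h, hh, hne⟩ := ht
        obtain ⟨μh, hμh⟩ := Option.ne_none_iff_exists'.mp hne
        rw [prefixProbE]
        simp [traceProbE_henabled hWF hh hμh hna]
      · simp [hr]
    rw [haw, hbT, zero_mul, mul_zero]

end PLTS
namespace PLTS

variable {S : Type*} {A : Type*} (L : PLTS S A)

private lemma ite_zero_mul_form {C : Prop} [Decidable C] (X : ℝ≥0∞) :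
    (if C then X else 0) = (if C then (1:ℝ≥0∞) else 0) * X := by
  by_cases h : C <;> simp [h]

private lemma ite_tsum_push {C : Prop} [Decidable C] {β : Type*} (F : β → ℝ≥0∞) :
    (if C then (∑' b : β, F b) else 0) = ∑' b : β, (if C then F b else 0) := by
  by_cases h : C <;> simp [h]

private lemma ite_mul_push {C : Prop} [Decidable C] (c X : ℝ≥0∞) :
    (if C then c * X else 0) = c * (if C then X else 0) := by
  by_cases h : C <;> simp [h]

/-- restriction of the hidden-trace sum to sequences of length `n` -/
noncomputable def gN (n : ℕ) (s : S) : ℝ≥0∞ :=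
  ∑' t : S, if L.HDisabled t then
    (∑' hl : List A, if (hl ∈ L.HSeq ∧ hl.length = n) then L.traceProbE hl s [] t else 0) else 0

lemma gN_partial_le_one (hWF : L.WF) : ∀ (N : ℕ) (s : S),
    (∑ n ∈ Finset.range N, L.gN n s) ≤ 1 := by
  intro N
  induction N with
  | zero => intro s; simp
  | succ N ih =>
    intro s
    rw [Finset.sum_range_succ']
    by_cases hs : L.HDisabled s
    · -- from an H-disabled state, only the empty hidden sequence contributes
      have h0 : L.gN 0 s ≤ 1 := by
        rw [gN]
        have hinner : ∀ t : S,
            (∑' hl : List A, if (hl ∈ L.HSeq ∧ hl.length = 0) then L.traceProbE hl s [] t else 0)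
              = if t = s then 1 else 0 := by
          intro t
          rw [tsum_eq_single ([] : List A) (by
            intro hl hne
            rw [if_neg]
            rintro ⟨-, hlen⟩
            exact hne (List.length_eq_zero_iff.mp hlen))]
          rw [if_pos ⟨fun x hx => absurd hx (List.not_mem_nil), rfl⟩, traceProbE_nil]
        calc (∑' t : S, if L.HDisabled t then
              (∑' hl : List A, if (hl ∈ L.HSeq ∧ hl.length = 0) then L.traceProbE hl s [] t else 0) else 0)
            ≤ ∑' t : S, if t = s then 1 else 0 := by
              refine ENNReal.tsum_le_tsum fun t => ?_
              rw [hinner t]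
              by_cases ht : L.HDisabled t <;> simp [ht]
          _ = 1 := tsum_ite_eq s 1
      have hsucc : ∀ n : ℕ, L.gN (n + 1) s = 0 := by
        intro n
        rw [gN, ENNReal.tsum_eq_zero]
        intro t
        rw [ite_tsum_push]
        rw [ENNReal.tsum_eq_zero]
        intro hl
        by_cases hc : hl ∈ L.HSeq ∧ hl.length = n + 1
        · obtain ⟨h, r, rfl⟩ : ∃ h r, hl = h :: r := by
            cases hl with
            | nil => simp at hc
            | cons h r => exact ⟨h, r, rfl⟩
          have hh : h ∈ L.hid := hc.1 h (List.mem_cons_self)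
          rw [if_pos hc, L.traceProbE_trans_none (hs h hh)]
          split <;> rfl
        · rw [if_neg hc]
          split <;> rfl
      calc (∑ n ∈ Finset.range N, L.gN (n + 1) s) + L.gN 0 s
          = 0 + L.gN 0 s := by
            rw [Finset.sum_eq_zero fun n _ => hsucc n]
        _ ≤ 1 := by rw [zero_add]; exact h0
    · -- H-enabled state: recurse through the unique hidden step
      unfold HDisabled at hs
      push_neg at hs
      obtain ⟨h, hh, hne⟩ := hs
      obtain ⟨μ, hμ⟩ := Option.ne_none_iff_exists'.mp hne
      have hnotinp : h ∉ L.inp := hWF.hid_not_inp hh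
      have h0 : L.gN 0 s = 0 := by
        rw [gN, ENNReal.tsum_eq_zero]
        intro t
        have hinner :
            (∑' hl : List A, if (hl ∈ L.HSeq ∧ hl.length = 0) then L.traceProbE hl s [] t else 0)
              = if t = s then 1 else 0 := by
          rw [tsum_eq_single ([] : List A) (by
            intro hl hne'
            rw [if_neg]
            rintro ⟨-, hlen⟩
            exact hne' (List.length_eq_zero_iff.mp hlen))]
          rw [if_pos ⟨fun x hx => absurd hx (List.not_mem_nil), rfl⟩, traceProbE_nil]
        rw [hinner]
        by_cases hts : t = s
        · subst hts
          have : ¬ L.HDisabled t := by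
            intro hc
            exact hne (hc h hh)
          simp [this]
        · simp [hts]
      have hsucc : ∀ (n : ℕ) (hN : True), L.gN (n + 1) s = ∑' s₃ : S, ENNReal.ofReal (μ s₃) * L.gN n s₃ := by
        intro n _
        have hinner : ∀ t : S,
            (∑' hl : List A, if (hl ∈ L.HSeq ∧ hl.length = n + 1) then L.traceProbE hl s [] t else 0)
            = ∑' s₃ : S, ENNReal.ofReal (μ s₃) *
                (∑' r : List A, if (r ∈ L.HSeq ∧ r.length = n) then L.traceProbE r s₃ [] t else 0) := by
          intro t
          have hreindex :
              (∑' hl : List A, if (hl ∈ L.HSeq ∧ hl.length = n + 1) then L.traceProbE hl s [] t else 0)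
              = ∑' r : List A, if ((h :: r) ∈ L.HSeq ∧ (h :: r).length = n + 1)
                  then L.traceProbE (h :: r) s [] t else 0 := by
            symm
            have hinj : Function.Injective (List.cons h : List A → List A) := by
              intro x y hxy
              injection hxy
            refine Function.Injective.tsum_eq (f := fun hl => if (hl ∈ L.HSeq ∧ hl.length = n + 1) then L.traceProbE hl s [] t else 0) hinj ?_
            intro hl hhl
            simp only [Function.mem_support] at hhl
            by_cases hc : hl ∈ L.HSeq ∧ hl.length = n + 1
            · obtain ⟨h', r, rfl⟩ : ∃ h' r, hl = h' :: r := by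
                cases hl with
                | nil => simp at hc
                | cons h' r => exact ⟨h', r, rfl⟩
              have hh' : h' ∈ L.hid := hc.1 h' (List.mem_cons_self)
              rw [if_pos hc] at hhl
              have htr : L.trans s h' ≠ none := by
                intro hcon
                exact hhl (L.traceProbE_trans_none hcon _ _ _)
              obtain ⟨μ', hμ'⟩ := Option.ne_none_iff_exists'.mp htr
              have : h' = h := hWF.2.2.2.2.1 s h' h μ μ' (Or.inr hh) hμ hμ'
              exact ⟨r, by rw [this]⟩
            · rw [if_neg hc] at hhl
              exact absurd rfl hhl
          rw [hreindex]
          have hcongr : ∀ r : List A,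
              (if ((h :: r) ∈ L.HSeq ∧ (h :: r).length = n + 1)
                then L.traceProbE (h :: r) s [] t else 0)
              = (if (r ∈ L.HSeq ∧ r.length = n) then (1:ℝ≥0∞) else 0) *
                  (∑' s₃ : S, ENNReal.ofReal (μ s₃) * L.traceProbE r s₃ [] t) := by
            intro r
            have hiff : ((h :: r) ∈ L.HSeq ∧ (h :: r).length = n + 1) ↔ (r ∈ L.HSeq ∧ r.length = n) := by
              constructor
              · rintro ⟨h1, h2⟩
                exact ⟨fun x hx => h1 x (List.mem_cons_of_mem _ hx), Nat.succ_injective h2⟩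
              · rintro ⟨h1, h2⟩
                refine ⟨fun x hx => ?_, by simp [h2]⟩
                rcases List.mem_cons.1 hx with rfl | hx
                · exact hh
                · exact h1 x hx
            by_cases hc : r ∈ L.HSeq ∧ r.length = n
            · rw [if_pos (hiff.mpr hc), if_pos hc, one_mul, L.traceProbE_out_some hnotinp hμ]
            · rw [if_neg (fun hcc => hc (hiff.mp hcc)), if_neg hc, zero_mul]
          rw [tsum_congr hcongr]
          rw [tsum_congr (fun r => by
            rw [← ite_zero_mul_form, ite_tsum_push, tsum_congr (fun s₃ => ite_mul_push _ _)])]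
          rw [ENNReal.tsum_comm]
          exact tsum_congr fun s₃ => ENNReal.tsum_mul_left
        rw [gN]
        rw [tsum_congr (fun t => by
          rw [hinner t, ite_tsum_push (C := L.HDisabled t),
            tsum_congr (fun s₃ => ite_mul_push (C := L.HDisabled t) _ _)])]
        rw [ENNReal.tsum_comm]
        exact tsum_congr fun s₃ => by rw [ENNReal.tsum_mul_left]; rfl
      calc (∑ n ∈ Finset.range N, L.gN (n + 1) s) + L.gN 0 s
          = ∑ n ∈ Finset.range N, ∑' s₃ : S, ENNReal.ofReal (μ s₃) * L.gN n s₃ := by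
            rw [h0, add_zero]
            exact Finset.sum_congr rfl fun n hn => hsucc n trivial
        _ = ∑' s₃ : S, ∑ n ∈ Finset.range N, ENNReal.ofReal (μ s₃) * L.gN n s₃ :=
            (Summable.tsum_finsetSum fun n _ => ENNReal.summable).symm
        _ = ∑' s₃ : S, ENNReal.ofReal (μ s₃) * ∑ n ∈ Finset.range N, L.gN n s₃ := by
            exact tsum_congr fun s₃ => (Finset.mul_sum _ _ _).symm
        _ ≤ ∑' s₃ : S, ENNReal.ofReal (μ s₃) * 1 :=
            ENNReal.tsum_le_tsum fun s₃ => mul_le_mul_right (ih s₃) _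
        _ = 1 := by simpa using hWF.mu_tsumE hμ

lemma hw_sum_le_one (hWF : L.WF) (s : S) : ∑' t : S, L.hwE s t ≤ 1 := by
  have hsplit : ∑' t : S, L.hwE s t = ∑' n : ℕ, L.gN n s := by
    have hsig : ∀ t : S, (∑' hl : List A, if hl ∈ L.HSeq then L.traceProbE hl s [] t else 0)
        = ∑' n : ℕ, ∑' hl : List A,
            if (hl ∈ L.HSeq ∧ hl.length = n) then L.traceProbE hl s [] t else 0 := by
      intro t
      rw [← (Equiv.sigmaFiberEquiv (fun l : List A => l.length)).tsum_eq
        (fun hl => if hl ∈ L.HSeq then L.traceProbE hl s [] t else 0)]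
      rw [ENNReal.tsum_sigma']
      refine tsum_congr fun n => ?_
      rw [← tsum_subtype_eq_of_support_subset (s := {l : List A | l.length = n})
        (f := fun hl => if (hl ∈ L.HSeq ∧ hl.length = n) then L.traceProbE hl s [] t else 0)
        (by
          intro l hl
          simp only [Function.mem_support] at hl
          by_cases hc : l ∈ L.HSeq ∧ l.length = n
          · exact hc.2
          · rw [if_neg hc] at hl; exact absurd rfl hl)]
      refine tsum_congr fun x => ?_
      obtain ⟨l, hl⟩ := x
      simp only [Equiv.sigmaFiberEquiv, Equiv.coe_fn_mk]
      by_cases hc : l ∈ L.HSeq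
      · simp [hc, hl]
      · simp [hc]
    calc ∑' t : S, L.hwE s t
        = ∑' t : S, ∑' n : ℕ, (if L.HDisabled t then
            (∑' hl : List A, if (hl ∈ L.HSeq ∧ hl.length = n) then L.traceProbE hl s [] t else 0)
            else 0) := by
          refine tsum_congr fun t => ?_
          rw [hwE]
          by_cases ht : L.HDisabled t
          · rw [if_pos ht, hsig t]
            exact tsum_congr fun n => (if_pos ht).symm
          · rw [if_neg ht]
            symm
            rw [ENNReal.tsum_eq_zero]
            intro n
            exact if_neg ht
      _ = ∑' n : ℕ, L.gN n s := ENNReal.tsum_comm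
  rw [hsplit, ENNReal.tsum_eq_iSup_nat]
  exact iSup_le fun N => L.gN_partial_le_one hWF N s

lemma hwE_le_one (hWF : L.WF) (s t : S) : L.hwE s t ≤ 1 :=
  le_trans (ENNReal.le_tsum t) (L.hw_sum_le_one hWF s)

end PLTS
namespace PLTS

variable {S : Type*} {A : Type*} (L : PLTS S A)

/-- ENNReal version of `extDistState`. -/
noncomputable def extDistStateE (μ : S → ℝ) (t : S) : ℝ≥0∞ :=
  ∑' s'' : S, ENNReal.ofReal (μ s'') * L.hwE s'' t

lemma extDistStateE_le_one (hWF : L.WF) {s : S} {a : A} {μ : S → ℝ}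
    (hμ : L.trans s a = some μ) (t : S) : L.extDistStateE μ t ≤ 1 := by
  calc L.extDistStateE μ t ≤ ∑' s'' : S, ENNReal.ofReal (μ s'') * 1 :=
      ENNReal.tsum_le_tsum fun s'' => mul_le_mul_right (L.hwE_le_one hWF s'' t) _
    _ = 1 := by simpa using hWF.mu_tsumE hμ

lemma extDistStateE_sum_le_one (hWF : L.WF) {s : S} {a : A} {μ : S → ℝ}
    (hμ : L.trans s a = some μ) : ∑' t : S, L.extDistStateE μ t ≤ 1 := by
  simp only [extDistStateE]
  rw [ENNReal.tsum_comm]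
  calc ∑' s'' : S, ∑' t : S, ENNReal.ofReal (μ s'') * L.hwE s'' t
      = ∑' s'' : S, ENNReal.ofReal (μ s'') * ∑' t : S, L.hwE s'' t :=
        tsum_congr fun s'' => ENNReal.tsum_mul_left
    _ ≤ ∑' s'' : S, ENNReal.ofReal (μ s'') * 1 :=
        ENNReal.tsum_le_tsum fun s'' => mul_le_mul_right (L.hw_sum_le_one hWF s'') _
    _ = 1 := by simpa using hWF.mu_tsumE hμ

lemma extDistState_eq_toReal (hWF : L.WF) {s : S} {a : A} {μ : S → ℝ}
    (hμ : L.trans s a = some μ) (t : S) :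
    L.extDistState μ t = (L.extDistStateE μ t).toReal := by
  by_cases ht : L.HDisabled t
  · have hIE : ∀ s'' : S,
        (∑' hl : L.HSeq, L.traceProb hl.1 s'' [] t)
          = (L.hwE s'' t).toReal := by
      intro s''
      rw [hwE, if_pos ht]
      rw [← tsum_subtype_eq_of_support_subset (s := L.HSeq)
        (f := fun hl : List A => if hl ∈ L.HSeq then L.traceProbE hl s'' [] t else 0)
        (by
          intro l hl
          simp only [Function.mem_support] at hl
          by_cases hc : l ∈ L.HSeq
          · exact hc
          · rw [if_neg hc] at hl; exact absurd rfl hl)]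
      rw [ENNReal.tsum_toReal_eq (fun hl =>
        ne_top_of_le_ne_top ENNReal.one_ne_top (by
          split
          · exact L.traceProbE_le_one hWF _ _ _ _
          · exact zero_le_one))]
      refine tsum_congr fun hl => ?_
      rw [if_pos hl.2, L.traceProb_eq_toReal hWF]
    have hhw_ne_top : ∀ s'' : S, L.hwE s'' t ≠ ⊤ :=
      fun s'' => ne_top_of_le_ne_top ENNReal.one_ne_top (L.hwE_le_one hWF s'' t)
    rw [extDistState, if_pos ht, extDistStateE]
    rw [ENNReal.tsum_toReal_eq (fun s'' => ENNReal.mul_ne_top ENNReal.ofReal_ne_top (hhw_ne_top s''))]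
    refine tsum_congr fun s'' => ?_
    rw [hIE s'', ENNReal.toReal_mul, ENNReal.toReal_ofReal (hWF.mu_nonneg hμ s'')]
  · rw [extDistState, if_neg ht, extDistStateE]
    have : ∀ s'' : S, ENNReal.ofReal (μ s'') * L.hwE s'' t = 0 := by
      intro s''
      rw [hwE, if_neg ht, mul_zero]
    rw [tsum_congr this]
    simp

lemma extDistStateE_eq_ofReal (hWF : L.WF) {s : S} {a : A} {μ : S → ℝ}
    (hμ : L.trans s a = some μ) (t : S) :
    ENNReal.ofReal (L.extDistState μ t) = L.extDistStateE μ t := by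
  rw [L.extDistState_eq_toReal hWF hμ t, ENNReal.ofReal_toReal
    (ne_top_of_le_ne_top ENNReal.one_ne_top (L.extDistStateE_le_one hWF hμ t))]

/-- one-step unfolding through the hidden closure -/
lemma obsStep (hWF : L.WF) {μ : S → ℝ} {e : A} {ev : List A} (iv : List A) :
    ∑' s'' : S, ENNReal.ofReal (μ s'') * L.obsProbE s'' iv (e :: ev)
      = ∑' t : S, L.extDistStateE μ t * L.obsProbE t iv (e :: ev) := by
  calc ∑' s'' : S, ENNReal.ofReal (μ s'') * L.obsProbE s'' iv (e :: ev)
      = ∑' s'' : S, ∑' t : S, ENNReal.ofReal (μ s'') * (L.hwE s'' t * L.obsProbE t iv (e :: ev)) := by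
        refine tsum_congr fun s'' => ?_
        rw [L.hiddenUnfold hWF s'' iv, ENNReal.tsum_mul_left]
    _ = ∑' t : S, ∑' s'' : S, ENNReal.ofReal (μ s'') * (L.hwE s'' t * L.obsProbE t iv (e :: ev)) :=
        ENNReal.tsum_comm
    _ = ∑' t : S, L.extDistStateE μ t * L.obsProbE t iv (e :: ev) := by
        refine tsum_congr fun t => ?_
        rw [extDistStateE, ← ENNReal.tsum_mul_right]
        exact tsum_congr fun s'' => (mul_assoc _ _ _).symm

lemma obsProbE_nil (s : S) (iv : List A) : L.obsProbE s iv [] = 1 := by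
  rw [obsProbE]
  rw [tsum_eq_single ([] : List A) (by
    intro l hl
    rw [if_neg]
    intro hc
    exact hl ((mem_gammaSet_nil_iff l).mp hc))]
  rw [if_pos ((mem_gammaSet_nil_iff []).mpr rfl), prefixProbE_nil]

lemma obsProbE_zero_of_all_heads (s : S) (iv : List A) {e : A} {ev : List A}
    (h : ∀ b r, (b :: r) ∈ gammaSet L.obs (e :: ev) → L.prefixProbE s iv (b :: r) = 0) :
    L.obsProbE s iv (e :: ev) = 0 := by
  rw [obsProbE, ENNReal.tsum_eq_zero]
  intro l
  by_cases hl : l ∈ gammaSet L.obs (e :: ev)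
  · rw [if_pos hl]
    cases l with
    | nil => exact absurd hl nil_not_mem_gammaSet
    | cons b r => exact h b r hl
  · rw [if_neg hl]

/-- if every positive-probability element of `γ(e::ev)` starts with `a₀`,
the observation sum reindexes along `cons a₀` -/
lemma obsProbE_cons_reindex (s : S) (iv : List A) {e a₀ : A} {ev : List A}
    (h : ∀ b r, (b :: r) ∈ gammaSet L.obs (e :: ev) → b ≠ a₀ → L.prefixProbE s iv (b :: r) = 0) :
    L.obsProbE s iv (e :: ev)
      = ∑' r : List A, if (a₀ :: r) ∈ gammaSet L.obs (e :: ev)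
          then L.prefixProbE s iv (a₀ :: r) else 0 := by
  rw [obsProbE]
  symm
  have hinj : Function.Injective (List.cons a₀ : List A → List A) := by
    intro x y hxy
    injection hxy
  refine Function.Injective.tsum_eq
    (f := fun l => if l ∈ gammaSet L.obs (e :: ev) then L.prefixProbE s iv l else 0) hinj ?_
  intro l hl
  simp only [Function.mem_support] at hl
  by_cases hmem : l ∈ gammaSet L.obs (e :: ev)
  · cases l with
    | nil => exact absurd hmem nil_not_mem_gammaSet
    | cons b r =>
      by_cases hb : b = a₀
      · exact ⟨r, by rw [hb]⟩
      · rw [if_pos hmem, h b r hmem hb] at hl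
        exact absurd rfl hl
  · rw [if_neg hmem] at hl
    exact absurd rfl hl

end PLTS
namespace PLTS

variable {S : Type*} {A : Type*} (L : PLTS S A)

lemma WF.classify {L : PLTS S A} (hWF : L.WF) {s : S} (hs : L.HDisabled s) :
    (∀ b, L.trans s b = none) ∨
    (∃ r μ, r ∈ L.resp ∧ L.trans s r = some μ ∧ ∀ b, b ≠ r → L.trans s b = none) ∨
    ((∃ i μ, i ∈ L.inp ∧ L.trans s i = some μ) ∧ (∀ i ∈ L.inp, L.trans s i ≠ none) ∧
      (∀ b, b ∉ L.inp → L.trans s b = none)) := by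
  by_cases h : ∃ a μ, L.trans s a = some μ
  · obtain ⟨a, μ, hμ⟩ := h
    rcases hWF.2.2.2.2.2.2 s a μ hμ with ha | ha
    · -- a is an input
      refine Or.inr (Or.inr ⟨⟨a, μ, ha, hμ⟩, ?_, ?_⟩)
      · intro i hi hnone
        obtain ⟨μ₂, hμ₂⟩ := hWF.2.2.2.2.2.1 s a i μ ha hi hμ
        rw [hμ₂] at hnone
        exact Option.some_ne_none μ₂ hnone
      · intro b hb
        cases hb' : L.trans s b with
        | none => rfl
        | some μ' =>
          rcases hWF.2.2.2.2.2.2 s b μ' hb' with hbi | hbo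
          · exact absurd hbi hb
          · exact absurd (hWF.2.2.2.2.1 s a b μ' μ hbo hb' hμ).symm
              (fun hc => Set.disjoint_left.1 hWF.2.2.1 ha (hc ▸ hbo))
    · -- a is an output, hence a response
      have har : a ∈ L.resp := by
        rcases ha with hr | hh
        · exact hr
        · exact absurd (hs a hh) (by rw [hμ]; exact Option.some_ne_none μ)
      exact Or.inr (Or.inl ⟨a, μ, har, hμ, fun b hb => hWF.only_enabled ha hμ hb⟩)
  · push_neg at h
    exact Or.inl fun b => Option.eq_none_iff_forall_not_mem.mpr
      (fun μ hμ => h b μ (Option.mem_def.mp hμ))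

lemma obsProbE_dead {s : S} (hdead : ∀ b, L.trans s b = none) (e : A) (ev iv : List A) :
    L.obsProbE s iv (e :: ev) = 0 :=
  L.obsProbE_zero_of_all_heads s iv fun b r _ => L.prefixProbE_trans_none (hdead b) r iv

lemma obsProbE_inp_iv_nil {s : S} (hout : ∀ b, b ∉ L.inp → L.trans s b = none)
    (e : A) (ev : List A) : L.obsProbE s [] (e :: ev) = 0 := by
  refine L.obsProbE_zero_of_all_heads s [] fun b r _ => ?_
  by_cases hb : b ∈ L.inp
  · exact L.prefixProbE_inp_nil hb r s
  · exact L.prefixProbE_trans_none (hout b hb) r []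

private lemma tsum_ite_mul_swap {β : Type*} (C : β → Prop) (c : S → ℝ≥0∞) (F : S → β → ℝ≥0∞) :
    ∑' r : β, (if C r then (∑' s'' : S, c s'' * F s'' r) else 0)
      = ∑' s'' : S, c s'' * ∑' r : β, (if C r then F s'' r else 0) := by
  classical
  calc ∑' r : β, (if C r then (∑' s'' : S, c s'' * F s'' r) else 0)
      = ∑' r : β, ∑' s'' : S, c s'' * (if C r then F s'' r else 0) := by
        refine tsum_congr fun r => ?_
        rw [ite_tsum_push]
        exact tsum_congr fun s'' => ite_mul_push _ _
    _ = ∑' s'' : S, ∑' r : β, c s'' * (if C r then F s'' r else 0) := ENNReal.tsum_comm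
    _ = ∑' s'' : S, c s'' * ∑' r : β, (if C r then F s'' r else 0) :=
        tsum_congr fun s'' => ENNReal.tsum_mul_left

/-- the zero-condition for non-matching heads from an input-enabled state -/
private lemma inp_hzero {L : PLTS S A} {s : S} {i : A}
    (hout : ∀ b, b ∉ L.inp → L.trans s b = none) (iv : List A) :
    ∀ b r, b ≠ i → L.prefixProbE s (i :: iv) (b :: r) = 0 := by
  intro b r hb
  by_cases hbi : b ∈ L.inp
  · exact L.prefixProbE_inp_ne hbi (fun hc => hb hc.symm) r iv s
  · exact L.prefixProbE_trans_none (hout b hbi) r (i :: iv)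

lemma obsProbE_step_dat (hWF : L.WF) {s : S} {i : A} {μ : S → ℝ} (hi : i ∈ L.dat)
    (hμ : L.trans s i = some μ) (hout : ∀ b, b ∉ L.inp → L.trans s b = none)
    (e : A) (ev iv : List A) :
    L.obsProbE s (i :: iv) (e :: ev)
      = ∑' t : S, L.extDistStateE μ t * L.obsProbE t iv (e :: ev) := by
  have hiinp : i ∈ L.inp := Or.inl hi
  have hiobs : i ∉ L.obs := hWF.dat_not_obs hi
  rw [L.obsProbE_cons_reindex s (i :: iv) (fun b r hbr hb => inp_hzero hout iv b r hb)]
  have hcongr : ∀ r : List A,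
      (if (i :: r) ∈ gammaSet L.obs (e :: ev) then L.prefixProbE s (i :: iv) (i :: r) else 0)
      = if r ∈ gammaSet L.obs (e :: ev)
          then (∑' s'' : S, ENNReal.ofReal (μ s'') * L.prefixProbE s'' iv r) else 0 := by
    intro r
    by_cases hr : r ∈ gammaSet L.obs (e :: ev)
    · rw [if_pos ((cons_mem_gammaSet_not_mem hiobs).mpr hr), if_pos hr,
        L.prefixProbE_inp_some hiinp hμ]
    · rw [if_neg (fun hc => hr ((cons_mem_gammaSet_not_mem hiobs).mp hc)), if_neg hr]
  rw [tsum_congr hcongr, tsum_ite_mul_swap]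
  exact L.obsStep hWF iv

lemma obsProbE_step_qry_match (hWF : L.WF) {s : S} {i : A} {μ : S → ℝ} (hi : i ∈ L.qry)
    (hμ : L.trans s i = some μ) (hout : ∀ b, b ∉ L.inp → L.trans s b = none)
    {e : A} {ev : List A} (hev : ev ≠ []) (hei : e = i) (iv : List A) :
    L.obsProbE s (i :: iv) (e :: ev)
      = ∑' t : S, L.extDistStateE μ t * L.obsProbE t iv ev := by
  subst hei
  have hiinp : e ∈ L.inp := Or.inr hi
  have hiobs : e ∈ L.obs := Or.inl hi
  rw [L.obsProbE_cons_reindex s (e :: iv) (fun b r hbr hb => inp_hzero hout iv b r hb)]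
  obtain ⟨e', ev', rfl⟩ : ∃ e' ev', ev = e' :: ev' := by
    cases ev with
    | nil => exact absurd rfl hev
    | cons e' ev' => exact ⟨e', ev', rfl⟩
  have hcongr : ∀ r : List A,
      (if (e :: r) ∈ gammaSet L.obs (e :: e' :: ev') then L.prefixProbE s (e :: iv) (e :: r) else 0)
      = if r ∈ gammaSet L.obs (e' :: ev')
          then (∑' s'' : S, ENNReal.ofReal (μ s'') * L.prefixProbE s'' iv r) else 0 := by
    intro r
    by_cases hr : r ∈ gammaSet L.obs (e' :: ev')
    · rw [if_pos ((cons_mem_gammaSet_mem_cons hiobs hev).mpr hr), if_pos hr,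
        L.prefixProbE_inp_some hiinp hμ]
    · rw [if_neg (fun hc => hr ((cons_mem_gammaSet_mem_cons hiobs hev).mp hc)), if_neg hr]
  rw [tsum_congr hcongr, tsum_ite_mul_swap]
  exact L.obsStep hWF iv

lemma obsProbE_step_qry_last (hWF : L.WF) {s : S} {i : A} {μ : S → ℝ} (hi : i ∈ L.qry)
    (hμ : L.trans s i = some μ) (hout : ∀ b, b ∉ L.inp → L.trans s b = none) (iv : List A) :
    L.obsProbE s (i :: iv) [i] = 1 := by
  have hiinp : i ∈ L.inp := Or.inr hi
  have hiobs : i ∈ L.obs := Or.inl hi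
  rw [L.obsProbE_cons_reindex s (i :: iv) (fun b r hbr hb => inp_hzero hout iv b r hb)]
  rw [tsum_eq_single ([] : List A) (by
    intro r hr
    rw [if_neg]
    intro hc
    exact hr ((cons_mem_gammaSet_singleton hiobs).mp hc))]
  rw [if_pos ((cons_mem_gammaSet_singleton hiobs).mpr rfl), L.prefixProbE_inp_some hiinp hμ]
  calc (∑' s'' : S, ENNReal.ofReal (μ s'') * L.prefixProbE s'' iv [])
      = ∑' s'' : S, ENNReal.ofReal (μ s'') := by
        refine tsum_congr fun s'' => ?_
        rw [prefixProbE_nil, mul_one]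
    _ = 1 := hWF.mu_tsumE hμ

lemma obsProbE_step_qry_mismatch {s : S} {i : A} (hi : i ∈ L.qry)
    (hout : ∀ b, b ∉ L.inp → L.trans s b = none)
    {e : A} {ev : List A} (hei : e ≠ i) (iv : List A) :
    L.obsProbE s (i :: iv) (e :: ev) = 0 := by
  refine L.obsProbE_zero_of_all_heads s (i :: iv) fun b r hbr => ?_
  by_cases hb : b = i
  · subst hb
    exact absurd hbr (cons_mem_gammaSet_mem_ne (show b ∈ L.obs from Or.inl hi) (fun hc : b = e => hei hc.symm))
  · exact inp_hzero hout iv b r hb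

lemma obsProbE_step_resp_match (hWF : L.WF) {s : S} {r₀ : A} {μ : S → ℝ} (hr₀ : r₀ ∈ L.resp)
    (hμ : L.trans s r₀ = some μ) (honly : ∀ b, b ≠ r₀ → L.trans s b = none)
    {e : A} {ev : List A} (hev : ev ≠ []) (hei : e = r₀) (iv : List A) :
    L.obsProbE s iv (e :: ev)
      = ∑' t : S, L.extDistStateE μ t * L.obsProbE t iv ev := by
  subst hei
  have hnotinp : e ∉ L.inp := fun hc => Set.disjoint_left.1 hWF.2.2.1 hc (Or.inl hr₀)
  have hobsr : e ∈ L.obs := Or.inr hr₀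
  rw [L.obsProbE_cons_reindex s iv
    (fun b r hbr hb => L.prefixProbE_trans_none (honly b hb) r iv)]
  obtain ⟨e', ev', rfl⟩ : ∃ e' ev', ev = e' :: ev' := by
    cases ev with
    | nil => exact absurd rfl hev
    | cons e' ev' => exact ⟨e', ev', rfl⟩
  have hcongr : ∀ r : List A,
      (if (e :: r) ∈ gammaSet L.obs (e :: e' :: ev') then L.prefixProbE s iv (e :: r) else 0)
      = if r ∈ gammaSet L.obs (e' :: ev')
          then (∑' s'' : S, ENNReal.ofReal (μ s'') * L.prefixProbE s'' iv r) else 0 := by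
    intro r
    by_cases hr : r ∈ gammaSet L.obs (e' :: ev')
    · rw [if_pos ((cons_mem_gammaSet_mem_cons hobsr hev).mpr hr), if_pos hr,
        L.prefixProbE_out_some hnotinp hμ]
    · rw [if_neg (fun hc => hr ((cons_mem_gammaSet_mem_cons hobsr hev).mp hc)), if_neg hr]
  rw [tsum_congr hcongr, tsum_ite_mul_swap]
  exact L.obsStep hWF iv

lemma obsProbE_step_resp_last (hWF : L.WF) {s : S} {r₀ : A} {μ : S → ℝ} (hr₀ : r₀ ∈ L.resp)
    (hμ : L.trans s r₀ = some μ) (honly : ∀ b, b ≠ r₀ → L.trans s b = none) (iv : List A) :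
    L.obsProbE s iv [r₀] = 1 := by
  have hnotinp : r₀ ∉ L.inp := fun hc => Set.disjoint_left.1 hWF.2.2.1 hc (Or.inl hr₀)
  have hobsr : r₀ ∈ L.obs := Or.inr hr₀
  rw [L.obsProbE_cons_reindex s iv
    (fun b r hbr hb => L.prefixProbE_trans_none (honly b hb) r iv)]
  rw [tsum_eq_single ([] : List A) (by
    intro r hr
    rw [if_neg]
    intro hc
    exact hr ((cons_mem_gammaSet_singleton hobsr).mp hc))]
  rw [if_pos ((cons_mem_gammaSet_singleton hobsr).mpr rfl), L.prefixProbE_out_some hnotinp hμ]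
  calc (∑' s'' : S, ENNReal.ofReal (μ s'') * L.prefixProbE s'' iv [])
      = ∑' s'' : S, ENNReal.ofReal (μ s'') := by
        refine tsum_congr fun s'' => ?_
        rw [prefixProbE_nil, mul_one]
    _ = 1 := hWF.mu_tsumE hμ

lemma obsProbE_step_resp_mismatch {s : S} {r₀ : A} (hr₀ : r₀ ∈ L.resp)
    (honly : ∀ b, b ≠ r₀ → L.trans s b = none)
    {e : A} {ev : List A} (hei : e ≠ r₀) (iv : List A) :
    L.obsProbE s iv (e :: ev) = 0 := by
  refine L.obsProbE_zero_of_all_heads s iv fun b r hbr => ?_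
  by_cases hb : b = r₀
  · subst hb
    exact absurd hbr (cons_mem_gammaSet_mem_ne (show b ∈ L.obs from Or.inr hr₀) (fun hc : b = e => hei hc.symm))
  · exact L.prefixProbE_trans_none (honly b hb) r iv

end PLTS
namespace PLTS

variable {S : Type*} {A : Type*} (L : PLTS S A)

lemma obsProbXE_none_ne_nil {e : A} {ev iv : List A} :
    L.obsProbXE none iv (e :: ev) = 0 := by
  simp [obsProbXE]

lemma step_compare (hWF : L.WF) {δ κ : ℝ} (hδ : 0 ≤ δ) (hκ : 0 ≤ κ)
    {R' : Option S → Option S → Prop} {μ₁ μ₂ : S → ℝ}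
    {s₁ s₂ : S} {a₁ a₂ : A} (hμ₁ : L.trans s₁ a₁ = some μ₁) (hμ₂ : L.trans s₂ a₂ = some μ₂)
    (hlift : ApproxLift R' δ (L.extDist μ₁) (L.extDist μ₂))
    {iv : List A} {e : A} {ev : List A}
    (hIH : ∀ x y : Option S, R' x y →
      (L.obsProbXE x iv (e :: ev) ≤ ENNReal.ofReal (Real.exp κ) * L.obsProbXE y iv (e :: ev) ∧
       L.obsProbXE y iv (e :: ev) ≤ ENNReal.ofReal (Real.exp κ) * L.obsProbXE x iv (e :: ev))) :
    (∑' t : S, L.extDistStateE μ₁ t * L.obsProbE t iv (e :: ev))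
        ≤ ENNReal.ofReal (Real.exp (δ + κ)) *
          ∑' t : S, L.extDistStateE μ₂ t * L.obsProbE t iv (e :: ev) ∧
    (∑' t : S, L.extDistStateE μ₂ t * L.obsProbE t iv (e :: ev))
        ≤ ENNReal.ofReal (Real.exp (δ + κ)) *
          ∑' t : S, L.extDistStateE μ₁ t * L.obsProbE t iv (e :: ev) := by
  classical
  set ν₁ : Option S → ℝ := L.extDist μ₁ with hν₁
  set ν₂ : Option S → ℝ := L.extDist μ₂ with hν₂
  set m₁ : Option S → ℝ≥0∞ :=
    fun x => ENNReal.ofReal (ν₁ x) * L.obsProbXE x iv (e :: ev) with hm₁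
  set m₂ : Option S → ℝ≥0∞ :=
    fun x => ENNReal.ofReal (ν₂ x) * L.obsProbXE x iv (e :: ev) with hm₂
  have hsum : ∀ (μ : S → ℝ), L.trans s₁ a₁ = some μ ∨ L.trans s₂ a₂ = some μ →
      (∑' t : S, L.extDistStateE μ t * L.obsProbE t iv (e :: ev))
        = ∑' x : Option S, ENNReal.ofReal (L.extDist μ x) * L.obsProbXE x iv (e :: ev) := by
    intro μ hμ
    have hμ' : ∃ (s : S) (a : A), L.trans s a = some μ := by
      rcases hμ with h | h
      · exact ⟨s₁, a₁, h⟩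
      · exact ⟨s₂, a₂, h⟩
    obtain ⟨s, a, hμ''⟩ := hμ'
    have h1 : ∀ t : S, L.extDistStateE μ t * L.obsProbE t iv (e :: ev)
        = ENNReal.ofReal (L.extDist μ (some t)) * L.obsProbXE (some t) iv (e :: ev) := by
      intro t
      rw [show L.extDist μ (some t) = L.extDistState μ t from rfl,
        L.extDistStateE_eq_ofReal hWF hμ'' t]
      rfl
    rw [tsum_congr h1]
    refine Function.Injective.tsum_eq (f := fun x : Option S =>
      ENNReal.ofReal (L.extDist μ x) * L.obsProbXE x iv (e :: ev)) (Option.some_injective S) ?_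
    intro x hx
    cases x with
    | some t => exact ⟨t, rfl⟩
    | none =>
      simp only [Function.mem_support] at hx
      rw [L.obsProbXE_none_ne_nil, mul_zero] at hx
      exact absurd rfl hx
  obtain ⟨β, hβbij, hβ⟩ := hlift
  have hsupp₁ : Function.support m₁ ⊆ {x : Option S | 0 < ν₁ x} := by
    intro x hx
    simp only [Function.mem_support, hm₁] at hx
    by_contra hc
    simp only [Set.mem_setOf_eq, not_lt] at hc
    rw [ENNReal.ofReal_of_nonpos hc, zero_mul] at hx
    exact hx rfl
  have hsupp₂ : Function.support m₂ ⊆ {x : Option S | 0 < ν₂ x} := by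
    intro x hx
    simp only [Function.mem_support, hm₂] at hx
    by_contra hc
    simp only [Set.mem_setOf_eq, not_lt] at hc
    rw [ENNReal.ofReal_of_nonpos hc, zero_mul] at hx
    exact hx rfl
  have hS₁ : (∑' x : Option S, m₁ x) = ∑' p : {x : Option S // 0 < ν₁ x}, m₁ p.1 := by
    exact (tsum_subtype_eq_of_support_subset (s := {x : Option S | 0 < ν₁ x}) hsupp₁).symm
  have hS₂ : (∑' x : Option S, m₂ x) = ∑' p : {x : Option S // 0 < ν₂ x}, m₂ p.1 := by
    exact (tsum_subtype_eq_of_support_subset (s := {x : Option S | 0 < ν₂ x}) hsupp₂).symm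
  have hbound₁ : ∀ p : {x : Option S // 0 < ν₁ x},
      ENNReal.ofReal (ν₁ p.1) ≤ ENNReal.ofReal (Real.exp δ) * ENNReal.ofReal (ν₂ (β p).1) := by
    intro p
    have habs := (hβ p).2
    have h1 : Real.log (ν₁ p.1) - Real.log (ν₂ (β p).1) ≤ δ := (abs_le.mp habs).2
    have hpos₁ : 0 < ν₁ p.1 := p.2
    have hpos₂ : 0 < ν₂ (β p).1 := (β p).2
    have : ν₁ p.1 ≤ Real.exp δ * ν₂ (β p).1 := by
      calc ν₁ p.1 = Real.exp (Real.log (ν₁ p.1)) := (Real.exp_log hpos₁).symm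
        _ ≤ Real.exp (δ + Real.log (ν₂ (β p).1)) := Real.exp_le_exp.mpr (by linarith)
        _ = Real.exp δ * ν₂ (β p).1 := by rw [Real.exp_add, Real.exp_log hpos₂]
    calc ENNReal.ofReal (ν₁ p.1) ≤ ENNReal.ofReal (Real.exp δ * ν₂ (β p).1) :=
        ENNReal.ofReal_le_ofReal this
      _ = ENNReal.ofReal (Real.exp δ) * ENNReal.ofReal (ν₂ (β p).1) :=
        ENNReal.ofReal_mul (Real.exp_nonneg δ)
  have hbound₂ : ∀ p : {x : Option S // 0 < ν₁ x},
      ENNReal.ofReal (ν₂ (β p).1) ≤ ENNReal.ofReal (Real.exp δ) * ENNReal.ofReal (ν₁ p.1) := by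
    intro p
    have habs := (hβ p).2
    have h1 : Real.log (ν₂ (β p).1) - Real.log (ν₁ p.1) ≤ δ := by
      have := (abs_le.mp habs).1
      linarith
    have hpos₁ : 0 < ν₁ p.1 := p.2
    have hpos₂ : 0 < ν₂ (β p).1 := (β p).2
    have : ν₂ (β p).1 ≤ Real.exp δ * ν₁ p.1 := by
      calc ν₂ (β p).1 = Real.exp (Real.log (ν₂ (β p).1)) := (Real.exp_log hpos₂).symm
        _ ≤ Real.exp (δ + Real.log (ν₁ p.1)) := Real.exp_le_exp.mpr (by linarith)
        _ = Real.exp δ * ν₁ p.1 := by rw [Real.exp_add, Real.exp_log hpos₁]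
    calc ENNReal.ofReal (ν₂ (β p).1) ≤ ENNReal.ofReal (Real.exp δ * ν₁ p.1) :=
        ENNReal.ofReal_le_ofReal this
      _ = ENNReal.ofReal (Real.exp δ) * ENNReal.ofReal (ν₁ p.1) :=
        ENNReal.ofReal_mul (Real.exp_nonneg δ)
  have hexp : ENNReal.ofReal (Real.exp (δ + κ))
      = ENNReal.ofReal (Real.exp δ) * ENNReal.ofReal (Real.exp κ) := by
    rw [Real.exp_add, ENNReal.ofReal_mul (Real.exp_nonneg δ)]
  have hreindex : (∑' p : {x : Option S // 0 < ν₁ x}, m₂ (β p).1)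
      = ∑' q : {x : Option S // 0 < ν₂ x}, m₂ q.1 :=
    Equiv.tsum_eq (Equiv.ofBijective β hβbij) (fun q => m₂ q.1)
  constructor
  · rw [hsum μ₁ (Or.inl hμ₁), hsum μ₂ (Or.inr hμ₂)]
    show (∑' x : Option S, m₁ x) ≤ _ * ∑' x : Option S, m₂ x
    rw [hS₁, hS₂, ← hreindex, ← ENNReal.tsum_mul_left]
    refine ENNReal.tsum_le_tsum fun p => ?_
    have hIHp := (hIH p.1 (β p).1 (hβ p).1).1
    calc m₁ p.1 = ENNReal.ofReal (ν₁ p.1) * L.obsProbXE p.1 iv (e :: ev) := rfl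
      _ ≤ (ENNReal.ofReal (Real.exp δ) * ENNReal.ofReal (ν₂ (β p).1)) *
            (ENNReal.ofReal (Real.exp κ) * L.obsProbXE (β p).1 iv (e :: ev)) :=
          mul_le_mul' (hbound₁ p) hIHp
      _ = ENNReal.ofReal (Real.exp (δ + κ)) * m₂ (β p).1 := by
          rw [hexp, hm₂]
          ring
  · rw [hsum μ₁ (Or.inl hμ₁), hsum μ₂ (Or.inr hμ₂)]
    show (∑' x : Option S, m₂ x) ≤ _ * ∑' x : Option S, m₁ x
    rw [hS₁, hS₂, ← hreindex, ← ENNReal.tsum_mul_left]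
    refine ENNReal.tsum_le_tsum fun p => ?_
    have hIHp := (hIH p.1 (β p).1 (hβ p).1).2
    calc m₂ (β p).1 = ENNReal.ofReal (ν₂ (β p).1) * L.obsProbXE (β p).1 iv (e :: ev) := rfl
      _ ≤ (ENNReal.ofReal (Real.exp δ) * ENNReal.ofReal (ν₁ p.1)) *
            (ENNReal.ofReal (Real.exp κ) * L.obsProbXE p.1 iv (e :: ev)) :=
          mul_le_mul' (hbound₂ p) hIHp
      _ = ENNReal.ofReal (Real.exp (δ + κ)) * m₁ p.1 := by
          rw [hexp, hm₁]
          ring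

end PLTS
namespace PLTS

variable {S : Type*} {A : Type*} (L : PLTS S A)

lemma obsProbXE_nil (x : Option S) (iv : List A) : L.obsProbXE x iv [] = 1 := by
  cases x with
  | some s => exact L.obsProbE_nil s iv
  | none => simp [obsProbXE]

lemma extDistStateE_not_HDis {μ : S → ℝ} {t : S} (ht : ¬ L.HDisabled t) :
    L.extDistStateE μ t = 0 := by
  rw [extDistStateE]
  rw [ENNReal.tsum_eq_zero]
  intro s''
  rw [hwE, if_neg ht, mul_zero]

private lemma step_sum_le_one (hWF : L.WF) {s : S} {a : A} {μ : S → ℝ}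
    (hμ : L.trans s a = some μ) {iv ev : List A}
    (hle : ∀ t, L.HDisabled t → L.obsProbE t iv ev ≤ 1) :
    (∑' t : S, L.extDistStateE μ t * L.obsProbE t iv ev) ≤ 1 := by
  calc (∑' t : S, L.extDistStateE μ t * L.obsProbE t iv ev)
      ≤ ∑' t : S, L.extDistStateE μ t * 1 := by
        refine ENNReal.tsum_le_tsum fun t => ?_
        by_cases ht : L.HDisabled t
        · exact mul_le_mul_right (hle t ht) _
        · rw [L.extDistStateE_not_HDis ht, zero_mul, zero_mul]
    _ = ∑' t : S, L.extDistStateE μ t := by simp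
    _ ≤ 1 := L.extDistStateE_sum_le_one hWF hμ

lemma obsProbE_le_one_aux (hWF : L.WF) : ∀ (n : ℕ) (iv ev : List A),
    iv.length + ev.length ≤ n → (∀ i ∈ iv, i ∈ L.inp) →
    ∀ s : S, L.HDisabled s → L.obsProbE s iv ev ≤ 1 := by
  intro n
  induction n with
  | zero =>
    intro iv ev hlen hiv s hs
    have hev : ev = [] := List.length_eq_zero_iff.mp (by omega)
    rw [hev, L.obsProbE_nil]
  | succ n ih =>
    intro iv ev hlen hiv s hs
    cases ev with
    | nil => rw [L.obsProbE_nil]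
    | cons e ev' =>
      rcases hWF.classify hs with hdead | ⟨r₀, μ, hr₀, hμ, honly⟩ | ⟨⟨i₀, μ₀, hi₀, hμ₀⟩, hen, hout⟩
      · rw [L.obsProbE_dead hdead]
        exact zero_le_one
      · by_cases hei : e = r₀
        · by_cases hev' : ev' = []
          · subst hev'
            rw [hei, L.obsProbE_step_resp_last hWF hr₀ hμ honly]
          · rw [L.obsProbE_step_resp_match hWF hr₀ hμ honly hev' hei iv]
            refine step_sum_le_one L hWF hμ fun t ht => ?_
            have hlen' : iv.length + ev'.length ≤ n := by
              simp only [List.length_cons] at hlen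
              omega
            exact ih iv ev' hlen' hiv t ht
        · rw [L.obsProbE_step_resp_mismatch hr₀ honly hei iv]
          exact zero_le_one
      · cases iv with
        | nil =>
          rw [L.obsProbE_inp_iv_nil hout]
          exact zero_le_one
        | cons i iv' =>
          have hi : i ∈ L.inp := hiv i (List.mem_cons_self)
          obtain ⟨μ, hμ⟩ := Option.ne_none_iff_exists'.mp (hen i hi)
          have hiv' : ∀ j ∈ iv', j ∈ L.inp := fun j hj => hiv j (List.mem_cons_of_mem _ hj)
          have hlen' : iv'.length + (e :: ev').length ≤ n := by
            simp only [List.length_cons] at hlen ⊢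
            omega
          rcases hi with hdat | hqry
          · rw [L.obsProbE_step_dat hWF hdat hμ hout e ev' iv']
            exact step_sum_le_one L hWF hμ fun t ht => ih iv' (e :: ev') hlen' hiv' t ht
          · by_cases hei : e = i
            · by_cases hev' : ev' = []
              · subst hev'
                rw [hei, L.obsProbE_step_qry_last hWF hqry hμ hout iv']
              · rw [L.obsProbE_step_qry_match hWF hqry hμ hout hev' hei iv']
                refine step_sum_le_one L hWF hμ fun t ht => ?_
                have hlen'' : iv'.length + ev'.length ≤ n := by
                  simp only [List.length_cons] at hlen
                  omega
                exact ih iv' ev' hlen'' hiv' t ht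
            · rw [L.obsProbE_step_qry_mismatch hqry hout hei iv']
              exact zero_le_one

lemma obsProbXE_le_one (hWF : L.WF) (x : Option S) (hx : L.HDisabledX x)
    (iv ev : List A) (hiv : ∀ i ∈ iv, i ∈ L.inp) : L.obsProbXE x iv ev ≤ 1 := by
  cases x with
  | some s => exact L.obsProbE_le_one_aux hWF (iv.length + ev.length) iv ev le_rfl hiv s hx
  | none =>
    rw [obsProbXE]
    split <;> simp

end PLTS
namespace PLTS

variable {S : Type*} {A : Type*} (L : PLTS S A)

lemma exists_extTransX_some_iff (s : S) (a : A) :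
    (∃ ν, L.ExtTransX (some s) a ν) ↔ ∃ μ, L.trans s a = some μ := by
  constructor
  · rintro ⟨ν, s', hs', μ, hμ, -⟩
    obtain rfl : s = s' := Option.some.inj hs'
    exact ⟨μ, hμ⟩
  · rintro ⟨μ, hμ⟩
    exact ⟨L.extDist μ, s, rfl, μ, hμ, rfl⟩

lemma not_exists_extTransX_none (a : A) : ¬ ∃ ν, L.ExtTransX (none : Option S) a ν := by
  rintro ⟨ν, s', hs', -⟩
  simp at hs'

theorem unwindE (hWF : L.WF) {ε : ℝ} {R : ℝ → Option S → Option S → Prop}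
    (hR : L.IsUnwindingFamily ε R) :
    ∀ (n : ℕ) (iv ev : List A), iv.length + ev.length ≤ n → (∀ i ∈ iv, i ∈ L.inp) →
    ∀ (ε' : ℝ), 0 ≤ ε' → ε' ≤ ε → ∀ x₁ x₂, R ε' x₁ x₂ →
      (L.obsProbXE x₁ iv ev ≤ ENNReal.ofReal (Real.exp ε') * L.obsProbXE x₂ iv ev ∧
       L.obsProbXE x₂ iv ev ≤ ENNReal.ofReal (Real.exp ε') * L.obsProbXE x₁ iv ev) := by
  obtain ⟨hε, hdisab, hcond⟩ := hR
  intro n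
  induction n with
  | zero =>
    intro iv ev hlen hiv ε' hε0 hεε x₁ x₂ hx
    have hone : (1:ℝ≥0∞) ≤ ENNReal.ofReal (Real.exp ε') := by
      rw [← ENNReal.ofReal_one]
      exact ENNReal.ofReal_le_ofReal (Real.one_le_exp hε0)
    have hev : ev = [] := List.length_eq_zero_iff.mp (by omega)
    subst hev
    rw [L.obsProbXE_nil, L.obsProbXE_nil]
    exact ⟨by simpa using hone, by simpa using hone⟩
  | succ n ih =>
    intro iv ev hlen hiv ε' hε0 hεε x₁ x₂ hx
    have hone : (1:ℝ≥0∞) ≤ ENNReal.ofReal (Real.exp ε') := by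
      rw [← ENNReal.ofReal_one]
      exact ENNReal.ofReal_le_ofReal (Real.one_le_exp hε0)
    cases ev with
    | nil =>
      rw [L.obsProbXE_nil, L.obsProbXE_nil]
      exact ⟨by simpa using hone, by simpa using hone⟩
    | cons e ev' =>
      obtain ⟨hdis₁, hdis₂⟩ := hdisab ε' hε0 hεε x₁ x₂ hx
      have hiff : ∀ a, a ∈ L.inp ∪ L.resp →
          ((∃ ν, L.ExtTransX x₁ a ν) ↔ (∃ ν, L.ExtTransX x₂ a ν)) :=
        fun a ha => (hcond ε' hε0 hεε x₁ x₂ hx a ha).1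
      -- trivial pair constructors
      have pair_zero : ∀ {P₁ P₂ : ℝ≥0∞}, P₁ = 0 → P₂ = 0 →
          (P₁ ≤ ENNReal.ofReal (Real.exp ε') * P₂ ∧ P₂ ≤ ENNReal.ofReal (Real.exp ε') * P₁) := by
        intro P₁ P₂ h1 h2
        rw [h1, h2]
        simp
      have pair_one : ∀ {P₁ P₂ : ℝ≥0∞}, P₁ = 1 → P₂ = 1 →
          (P₁ ≤ ENNReal.ofReal (Real.exp ε') * P₂ ∧ P₂ ≤ ENNReal.ofReal (Real.exp ε') * P₁) := by
        intro P₁ P₂ h1 h2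
        rw [h1, h2, mul_one]
        exact ⟨hone, hone⟩
      -- a state related to ⊥ is completely disabled
      have hdead_of_none₁ : ∀ s₂ : S, x₁ = none → x₂ = some s₂ → ∀ b, L.trans s₂ b = none := by
        intro s₂ h1 h2 b
        subst h1; subst h2
        have hs₂ : L.HDisabled s₂ := hdis₂
        rcases hWF.classify hs₂ with hdead | ⟨r₀, μ, hr₀, hμ, -⟩ | ⟨⟨i₀, μ₀, hi₀, hμ₀⟩, -, -⟩
        · exact hdead b
        · exact absurd ((hiff r₀ (Or.inr hr₀)).mpr ((L.exists_extTransX_some_iff s₂ r₀).mpr ⟨μ, hμ⟩))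
            (L.not_exists_extTransX_none r₀)
        · exact absurd ((hiff i₀ (Or.inl hi₀)).mpr ((L.exists_extTransX_some_iff s₂ i₀).mpr ⟨μ₀, hμ₀⟩))
            (L.not_exists_extTransX_none i₀)
      have hdead_of_none₂ : ∀ s₁ : S, x₁ = some s₁ → x₂ = none → ∀ b, L.trans s₁ b = none := by
        intro s₁ h1 h2 b
        subst h1; subst h2
        have hs₁ : L.HDisabled s₁ := hdis₁
        rcases hWF.classify hs₁ with hdead | ⟨r₀, μ, hr₀, hμ, -⟩ | ⟨⟨i₀, μ₀, hi₀, hμ₀⟩, -, -⟩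
        · exact hdead b
        · exact absurd ((hiff r₀ (Or.inr hr₀)).mp ((L.exists_extTransX_some_iff s₁ r₀).mpr ⟨μ, hμ⟩))
            (L.not_exists_extTransX_none r₀)
        · exact absurd ((hiff i₀ (Or.inl hi₀)).mp ((L.exists_extTransX_some_iff s₁ i₀).mpr ⟨μ₀, hμ₀⟩))
            (L.not_exists_extTransX_none i₀)
      cases x₁ with
      | none =>
        cases x₂ with
        | none => exact pair_zero (L.obsProbXE_none_ne_nil) (L.obsProbXE_none_ne_nil)
        | some s₂ =>
          exact pair_zero (L.obsProbXE_none_ne_nil)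
            (L.obsProbE_dead (hdead_of_none₁ s₂ rfl rfl) e ev' iv)
      | some s₁ =>
        cases x₂ with
        | none =>
          exact pair_zero (L.obsProbE_dead (hdead_of_none₂ s₁ rfl rfl) e ev' iv)
            (L.obsProbXE_none_ne_nil)
        | some s₂ =>
          have hs₁ : L.HDisabled s₁ := hdis₁
          have hs₂ : L.HDisabled s₂ := hdis₂
          have hiff' : ∀ a, a ∈ L.inp ∪ L.resp →
              ((∃ μ, L.trans s₁ a = some μ) ↔ (∃ μ, L.trans s₂ a = some μ)) := by
            intro a ha
            rw [← L.exists_extTransX_some_iff s₁ a, ← L.exists_extTransX_some_iff s₂ a]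
            exact hiff a ha
          have hlift : ∀ a, a ∈ L.inp ∪ L.resp → ∀ (μ₁ μ₂ : S → ℝ),
              L.trans s₁ a = some μ₁ → L.trans s₂ a = some μ₂ →
              ∃ δ, 0 ≤ δ ∧ δ ≤ ε' ∧ ApproxLift (R (ε' - δ)) δ (L.extDist μ₁) (L.extDist μ₂) := by
            intro a ha μ₁ μ₂ hμ₁ hμ₂
            exact (hcond ε' hε0 hεε _ _ hx a ha).2 (L.extDist μ₁) (L.extDist μ₂)
              ⟨s₁, rfl, μ₁, hμ₁, rfl⟩ ⟨s₂, rfl, μ₂, hμ₂, rfl⟩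
          show (L.obsProbE s₁ iv (e :: ev') ≤ _ * L.obsProbE s₂ iv (e :: ev') ∧
                L.obsProbE s₂ iv (e :: ev') ≤ _ * L.obsProbE s₁ iv (e :: ev'))
          rcases hWF.classify hs₁ with hdead₁ | ⟨r₀, μ₁, hr₀, hμ₁, honly₁⟩ |
            ⟨⟨i₀, μ₀, hi₀, hμ₀⟩, hen₁, hout₁⟩
          · -- s₁ deadlocked, hence so is s₂
            have hdead₂ : ∀ b, L.trans s₂ b = none := by
              intro b
              rcases hWF.classify hs₂ with hdead | ⟨r₀, μ, hr₀, hμ, -⟩ |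
                ⟨⟨i₀, μ₀, hi₀, hμ₀⟩, -, -⟩
              · exact hdead b
              · obtain ⟨μ', hμ'⟩ := (hiff' r₀ (Or.inr hr₀)).mpr ⟨μ, hμ⟩
                rw [hdead₁ r₀] at hμ'
                simp at hμ'
              · obtain ⟨μ', hμ'⟩ := (hiff' i₀ (Or.inl hi₀)).mpr ⟨μ₀, hμ₀⟩
                rw [hdead₁ i₀] at hμ'
                simp at hμ'
            exact pair_zero (L.obsProbE_dead hdead₁ e ev' iv) (L.obsProbE_dead hdead₂ e ev' iv)
          · -- s₁ enables exactly the response r₀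
            obtain ⟨μ₂, hμ₂⟩ := (hiff' r₀ (Or.inr hr₀)).mp ⟨μ₁, hμ₁⟩
            have honly₂ : ∀ b, b ≠ r₀ → L.trans s₂ b = none := by
              intro b hb
              rcases hWF.classify hs₂ with hdead | ⟨r₀', μ', hr₀', hμ', honly₂'⟩ |
                ⟨-, -, hout₂⟩
              · exact hdead b
              · have : r₀ = r₀' := by
                  by_contra hne
                  rw [honly₂' r₀ hne] at hμ₂
                  simp at hμ₂
                exact honly₂' b (this ▸ hb)
              · have : r₀ ∉ L.inp := fun hc => Set.disjoint_left.1 hWF.2.2.1 hc (Or.inl hr₀)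
                rw [hout₂ r₀ this] at hμ₂
                simp at hμ₂
            by_cases hei : e = r₀
            · by_cases hev' : ev' = []
              · subst hev'
                exact pair_one (by rw [hei]; exact L.obsProbE_step_resp_last hWF hr₀ hμ₁ honly₁ iv)
                  (by rw [hei]; exact L.obsProbE_step_resp_last hWF hr₀ hμ₂ honly₂ iv)
              · obtain ⟨e'', ev'', rfl⟩ : ∃ e'' ev'', ev' = e'' :: ev'' := by
                  cases ev' with
                  | nil => exact absurd rfl hev'
                  | cons a b => exact ⟨a, b, rfl⟩
                obtain ⟨δ, hδ0, hδε, hliftr⟩ := hlift r₀ (Or.inr hr₀) μ₁ μ₂ hμ₁ hμ₂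
                have hlen' : iv.length + (e'' :: ev'').length ≤ n := by
                  simp only [List.length_cons] at hlen ⊢
                  omega
                have hIH : ∀ x y : Option S, R (ε' - δ) x y →
                    (L.obsProbXE x iv (e'' :: ev'') ≤
                        ENNReal.ofReal (Real.exp (ε' - δ)) * L.obsProbXE y iv (e'' :: ev'') ∧
                     L.obsProbXE y iv (e'' :: ev'') ≤
                        ENNReal.ofReal (Real.exp (ε' - δ)) * L.obsProbXE x iv (e'' :: ev'')) :=
                  fun x y hxy => ih iv (e'' :: ev'') hlen' hiv (ε' - δ) (by linarith)
                    (by linarith) x y hxy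
                have hcmp := L.step_compare hWF hδ0 (by linarith) hμ₁ hμ₂ hliftr hIH
                rw [show δ + (ε' - δ) = ε' by ring] at hcmp
                rw [L.obsProbE_step_resp_match hWF hr₀ hμ₁ honly₁ hev' hei iv,
                  L.obsProbE_step_resp_match hWF hr₀ hμ₂ honly₂ hev' hei iv]
                exact hcmp
            · exact pair_zero (L.obsProbE_step_resp_mismatch hr₀ honly₁ hei iv)
                (L.obsProbE_step_resp_mismatch hr₀ honly₂ hei iv)
          · -- s₁ is input-enabled
            have hinp₂ : (∀ i ∈ L.inp, L.trans s₂ i ≠ none) ∧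
                (∀ b, b ∉ L.inp → L.trans s₂ b = none) := by
              rcases hWF.classify hs₂ with hdead | ⟨r₀', μ', hr₀', hμ', honly₂'⟩ |
                ⟨-, hen₂, hout₂⟩
              · obtain ⟨μ', hμ'⟩ := (hiff' i₀ (Or.inl hi₀)).mp ⟨μ₀, hμ₀⟩
                rw [hdead i₀] at hμ'
                simp at hμ'
              · obtain ⟨μ', hμ'⟩ := (hiff' i₀ (Or.inl hi₀)).mp ⟨μ₀, hμ₀⟩
                have hne : i₀ ≠ r₀' := fun hc =>
                  Set.disjoint_left.1 hWF.2.2.1 hi₀ (hc ▸ Or.inl hr₀')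
                rw [honly₂' i₀ hne] at hμ'
                simp at hμ'
              · exact ⟨hen₂, hout₂⟩
            obtain ⟨hen₂, hout₂⟩ := hinp₂
            cases iv with
            | nil =>
              exact pair_zero (L.obsProbE_inp_iv_nil hout₁ e ev')
                (L.obsProbE_inp_iv_nil hout₂ e ev')
            | cons i iv' =>
              have hi : i ∈ L.inp := hiv i (List.mem_cons_self)
              have hiv' : ∀ j ∈ iv', j ∈ L.inp := fun j hj => hiv j (List.mem_cons_of_mem _ hj)
              obtain ⟨μ₁, hμ₁⟩ := Option.ne_none_iff_exists'.mp (hen₁ i hi)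
              obtain ⟨μ₂, hμ₂⟩ := Option.ne_none_iff_exists'.mp (hen₂ i hi)
              obtain ⟨δ, hδ0, hδε, hlifti⟩ := hlift i (Or.inl hi) μ₁ μ₂ hμ₁ hμ₂
              rcases hi with hdat | hqry
              · -- data point
                have hlen' : iv'.length + (e :: ev').length ≤ n := by
                  simp only [List.length_cons] at hlen ⊢
                  omega
                have hIH : ∀ x y : Option S, R (ε' - δ) x y →
                    (L.obsProbXE x iv' (e :: ev') ≤
                        ENNReal.ofReal (Real.exp (ε' - δ)) * L.obsProbXE y iv' (e :: ev') ∧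
                     L.obsProbXE y iv' (e :: ev') ≤
                        ENNReal.ofReal (Real.exp (ε' - δ)) * L.obsProbXE x iv' (e :: ev')) :=
                  fun x y hxy => ih iv' (e :: ev') hlen' hiv' (ε' - δ) (by linarith)
                    (by linarith) x y hxy
                have hcmp := L.step_compare hWF hδ0 (by linarith) hμ₁ hμ₂ hlifti hIH
                rw [show δ + (ε' - δ) = ε' by ring] at hcmp
                rw [L.obsProbE_step_dat hWF hdat hμ₁ hout₁ e ev' iv',
                  L.obsProbE_step_dat hWF hdat hμ₂ hout₂ e ev' iv']
                exact hcmp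
              · -- query
                by_cases hei : e = i
                · by_cases hev' : ev' = []
                  · subst hev'
                    exact pair_one
                      (by rw [hei]; exact L.obsProbE_step_qry_last hWF hqry hμ₁ hout₁ iv')
                      (by rw [hei]; exact L.obsProbE_step_qry_last hWF hqry hμ₂ hout₂ iv')
                  · obtain ⟨e'', ev'', rfl⟩ : ∃ e'' ev'', ev' = e'' :: ev'' := by
                      cases ev' with
                      | nil => exact absurd rfl hev'
                      | cons a b => exact ⟨a, b, rfl⟩
                    have hlen' : iv'.length + (e'' :: ev'').length ≤ n := by
                      simp only [List.length_cons] at hlen ⊢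
                      omega
                    have hIH : ∀ x y : Option S, R (ε' - δ) x y →
                        (L.obsProbXE x iv' (e'' :: ev'') ≤
                            ENNReal.ofReal (Real.exp (ε' - δ)) * L.obsProbXE y iv' (e'' :: ev'') ∧
                         L.obsProbXE y iv' (e'' :: ev'') ≤
                            ENNReal.ofReal (Real.exp (ε' - δ)) * L.obsProbXE x iv' (e'' :: ev'')) :=
                      fun x y hxy => ih iv' (e'' :: ev'') hlen' hiv' (ε' - δ) (by linarith)
                        (by linarith) x y hxy
                    have hcmp := L.step_compare hWF hδ0 (by linarith) hμ₁ hμ₂ hlifti hIH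
                    rw [show δ + (ε' - δ) = ε' by ring] at hcmp
                    rw [L.obsProbE_step_qry_match hWF hqry hμ₁ hout₁ hev' hei iv',
                      L.obsProbE_step_qry_match hWF hqry hμ₂ hout₂ hev' hei iv']
                    exact hcmp
                · exact pair_zero (L.obsProbE_step_qry_mismatch hqry hout₁ hei iv')
                    (L.obsProbE_step_qry_mismatch hqry hout₂ hei iv')

end PLTS
section Statements

open PLTS

variable {S : Type} {A : Type}

theorem stmt10 [Countable S] [Countable A] (L : PLTS S A) (hWF : L.WF)
    (ε : ℝ) (R : ℝ → Option S → Option S → Prop) (hR : L.IsUnwindingFamily ε R)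
    (ε' : ℝ) (hε'₀ : 0 ≤ ε') (hε' : ε' ≤ ε)
    (x₁ x₂ : Option S) (hx : R ε' x₁ x₂)
    (ivec : List A) (hiv : ∀ i ∈ ivec, i ∈ L.inp)
    (evec : List A) (hev : ∀ e ∈ evec, e ∈ L.obs) :
    L.obsProbX x₁ ivec evec ≤ Real.exp ε' * L.obsProbX x₂ ivec evec ∧
    L.obsProbX x₂ ivec evec ≤ Real.exp ε' * L.obsProbX x₁ ivec evec := by
  have hpair := L.unwindE hWF hR (ivec.length + evec.length) ivec evec le_rfl hiv ε'
    hε'₀ hε' x₁ x₂ hx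
  have hd := hR.2.1 ε' hε'₀ hε' x₁ x₂ hx
  have h1top : L.obsProbXE x₁ ivec evec ≠ ⊤ :=
    ne_top_of_le_ne_top ENNReal.one_ne_top (L.obsProbXE_le_one hWF x₁ hd.1 ivec evec hiv)
  have h2top : L.obsProbXE x₂ ivec evec ≠ ⊤ :=
    ne_top_of_le_ne_top ENNReal.one_ne_top (L.obsProbXE_le_one hWF x₂ hd.2 ivec evec hiv)
  constructor
  · rw [L.obsProbX_eq_toReal hWF, L.obsProbX_eq_toReal hWF]
    have h := ENNReal.toReal_mono (ENNReal.mul_ne_top ENNReal.ofReal_ne_top h2top) hpair.1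
    rwa [ENNReal.toReal_mul, ENNReal.toReal_ofReal (Real.exp_nonneg ε')] at h
  · rw [L.obsProbX_eq_toReal hWF, L.obsProbX_eq_toReal hWF]
    have h := ENNReal.toReal_mono (ENNReal.mul_ne_top ENNReal.ofReal_ne_top h1top) hpair.2
    rwa [ENNReal.toReal_mul, ENNReal.toReal_ofReal (Real.exp_nonneg ε')] at h

end Statements
end
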